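/- arXiv:1309.0536 — 3 statements merged into one kernel-verified Lean document; each statement's English description precedes it below -/
import Mathlib

section
/- Let L₁,…,L_l (l ≥ 2) be three-wise linearly independent linear forms in S = k[x₀,x₁,x₂], and let 𝕏(l) be the associated star configuration of binom(l,2) points. If a homogeneous form F of degree d vanishes on 𝕏(l) and d < l − 1, then F is divisible by each of the l linear forms L_i; consequently F = 0 whenever d < l − 1 and l > d + 1, i.e. no nonzero curve of degree d < l − 1 contains 𝕏(l). -/
open MvPolynomial Finset

/-- The (affine cone over the) vanishing ideal of a set `X ⊆ k³`: all polynomials in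
`k[x₀,x₁,x₂]` vanishing at every point of `X`. -/
def vanishingIdealOf {k : Type*} [Field k] (X : Set (Fin 3 → k)) :
    Ideal (MvPolynomial (Fin 3) k) where
  carrier := {F | ∀ v ∈ X, eval v F = 0}
  zero_mem' := by intro v _; simp
  add_mem' := by intro a b ha hb v hv; simp [ha v hv, hb v hv]
  smul_mem' := by intro c F hF v hv; simp [smul_eq_mul, hF v hv]

/-- The affine cone over the star configuration `𝕏(l)`: the set of nonzero vectors lying on
(at least) two of the lines `L_a = 0`, `L_b = 0` with `a ≠ b`. -/
def starCone {k : Type*} [Field k] {l : ℕ} (L : Fin l → MvPolynomial (Fin 3) k) :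
    Set (Fin 3 → k) :=
  {v | v ≠ 0 ∧ ∃ a b : Fin l, a ≠ b ∧ eval v (L a) = 0 ∧ eval v (L b) = 0}

namespace StarAux

variable {k : Type*} [Field k]

/-- The linear form with coefficient vector `c`. -/
noncomputable def linForm {n : ℕ} (c : Fin n → k) : MvPolynomial (Fin n) k :=
  ∑ j, C (c j) * X j

lemma eval_linForm {n : ℕ} (c v : Fin n → k) : eval v (linForm c) = ∑ j, c j * v j := by
  simp [linForm]

lemma linForm_isHomogeneous {n : ℕ} (c : Fin n → k) : (linForm c).IsHomogeneous 1 :=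
  IsHomogeneous.sum _ _ _ fun i _ => (isHomogeneous_X _ i).C_mul (c i)

lemma coeff_linForm_single {n : ℕ} (c : Fin n → k) (j : Fin n) :
    coeff (Finsupp.single j 1) (linForm c) = c j := by
  classical
  rw [linForm, coeff_sum]
  rw [Finset.sum_eq_single j]
  · simp [coeff_C_mul, coeff_X']
  · intro i _ hij
    simp [coeff_C_mul, coeff_X', Finsupp.single_left_inj (one_ne_zero (α := ℕ)), hij]
  · simp

lemma linForm_ne_zero {n : ℕ} {c : Fin n → k} (hc : c ≠ 0) : linForm c ≠ 0 := by
  intro h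
  apply hc
  funext j
  have := coeff_linForm_single c j
  rw [h] at this
  simpa using this.symm

/-- `linForm` as a linear map. -/
noncomputable def linFormL (n : ℕ) : (Fin n → k) →ₗ[k] MvPolynomial (Fin n) k where
  toFun := linForm
  map_add' c c' := by
    simp [linForm, map_add, add_mul, Finset.sum_add_distrib]
  map_smul' a c := by
    simp only [RingHom.id_apply, smul_eq_C_mul, linForm, Finset.mul_sum, Pi.smul_apply,
      smul_eq_mul, map_mul, mul_assoc]

/-- Dot product with `c` as a linear map. -/
noncomputable def dotL {n : ℕ} (c : Fin n → k) : (Fin n → k) →ₗ[k] k where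
  toFun x := ∑ j, c j * x j
  map_add' x y := by simp [mul_add, Finset.sum_add_distrib]
  map_smul' a x := by simp [Finset.mul_sum, mul_left_comm]

lemma dotL_apply {n : ℕ} (c x : Fin n → k) : dotL c x = ∑ j, c j * x j := rfl

/-- Three linearly independent linear functionals on `k³` have trivial common kernel. -/
lemma triple_indep_zero {ca cb cc : Fin 3 → k}
    (h : LinearIndependent k ![ca, cb, cc]) {v : Fin 3 → k}
    (ha : ∑ j, ca j * v j = 0) (hb : ∑ j, cb j * v j = 0) (hc : ∑ j, cc j * v j = 0) :
    v = 0 := by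
  have hsp : Submodule.span k (Set.range ![ca, cb, cc]) = ⊤ :=
    h.span_eq_top_of_card_eq_finrank (by simp)
  have hker : Set.range ![ca, cb, cc] ⊆ (LinearMap.ker (dotL v) : Set (Fin 3 → k)) := by
    rintro x ⟨i, rfl⟩
    fin_cases i <;>
      simpa [dotL_apply, mul_comm] using (by assumption : _)
  have htop : (⊤ : Submodule k (Fin 3 → k)) ≤ LinearMap.ker (dotL v) := by
    rw [← hsp]
    exact Submodule.span_le.mpr hker
  funext j
  have h1 : dotL v (Pi.single j 1) = 0 := htop (Submodule.mem_top)
  rw [dotL_apply] at h1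
  rw [Finset.sum_eq_single j] at h1
  · simpa using h1
  · intro i _ hij; simp [Pi.single_apply, hij]
  · simp

/-- Two linear functionals on `k³` have a common nonzero zero. -/
lemma exists_common_zero (c0 c1 : Fin 3 → k) :
    ∃ v : Fin 3 → k, v ≠ 0 ∧ (∑ j, c0 j * v j) = 0 ∧ (∑ j, c1 j * v j) = 0 := by
  classical
  let ψ : (Fin 3 → k) →ₗ[k] (Fin 2 → k) := LinearMap.pi ![dotL c0, dotL c1]
  have hni : ¬ Function.Injective ψ := by
    intro hinj
    have := LinearMap.finrank_le_finrank_of_injective hinj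
    simp [Module.finrank_pi] at this
  rw [Function.not_injective_iff] at hni
  obtain ⟨x, y, hxy, hne⟩ := hni
  refine ⟨x - y, sub_ne_zero.mpr hne, ?_, ?_⟩
  · have := congrFun (ψ.map_sub x y ▸ congrArg (· - ψ y) hxy) 0
    -- compute directly instead
    have h0 : ψ (x - y) = 0 := by rw [map_sub, hxy, sub_self]
    have := congrFun h0 0
    simpa [ψ, LinearMap.pi_apply, dotL_apply, mul_sub] using this
  · have h0 : ψ (x - y) = 0 := by rw [map_sub, hxy, sub_self]
    have := congrFun h0 1
    simpa [ψ, LinearMap.pi_apply, dotL_apply, mul_sub] using this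

lemma fin2_cases_ne_zero {u : Fin 2 → k} (h : u ≠ 0) : u 0 ≠ 0 ∨ u 1 ≠ 0 := by
  by_contra hc
  push_neg at hc
  exact h (funext fun i => by fin_cases i <;> simp [hc.1, hc.2])

/-- cross product criterion for proportionality in `k²`. -/
lemma cross_zero_proportional {u v : Fin 2 → k} (hu : u ≠ 0)
    (h : u 1 * v 0 - u 0 * v 1 = 0) : ∃ a : k, v = a • u := by
  rcases fin2_cases_ne_zero hu with h0 | h1
  · refine ⟨v 0 / u 0, funext fun i => ?_⟩
    fin_cases i <;> simp only [Pi.smul_apply, smul_eq_mul]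
    · show v 0 = v 0 / u 0 * u 0
      rw [div_mul_cancel₀ _ h0]
    · show v 1 = v 0 / u 0 * u 1
      field_simp
      linear_combination -h
  · refine ⟨v 1 / u 1, funext fun i => ?_⟩
    fin_cases i <;> simp only [Pi.smul_apply, smul_eq_mul]
    · show v 0 = v 1 / u 1 * u 0
      field_simp
      linear_combination h
    · show v 1 = v 1 / u 1 * u 1
      rw [div_mul_cancel₀ _ h1]

lemma degree_eq_one_exists {n : ℕ} {m : Fin n →₀ ℕ} (h : m.degree = 1) :
    ∃ j, m = Finsupp.single j 1 := by
  classical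
  have hne2 : m.support.Nonempty := by
    rcases Finset.eq_empty_or_nonempty m.support with he | hne
    · exfalso
      rw [Finsupp.degree_apply, he] at h
      simp at h
    · exact hne
  obtain ⟨j, hj⟩ := hne2
  have hmj : m j = 1 := by
    have h1 : 1 ≤ m j := Nat.one_le_iff_ne_zero.mpr (Finsupp.mem_support_iff.mp hj)
    have h2 : m j ≤ 1 := h ▸ Finsupp.le_degree j m
    omega
  refine ⟨j, Finsupp.ext fun i => ?_⟩
  rcases eq_or_ne i j with rfl | hij
  · simp [hmj]
  · rw [Finsupp.single_apply, if_neg (Ne.symm hij)]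
    by_contra hi
    have hi' : i ∈ m.support := Finsupp.mem_support_iff.mpr hi
    have hsub : ({i, j} : Finset (Fin n)) ⊆ m.support := by
      intro x hx
      rcases Finset.mem_insert.mp hx with rfl | hx
      · exact hi'
      · rwa [Finset.mem_singleton.mp hx]
    have : (∑ x ∈ ({i, j} : Finset (Fin n)), m x) ≤ m.degree :=
      Finset.sum_le_sum_of_subset hsub
    rw [Finset.sum_insert (by simp [hij]), Finset.sum_singleton, h, hmj] at this
    omega

/-- A homogeneous degree–1 polynomial is a linear form. -/
lemma isHomogeneous_one_repr {n : ℕ} {F : MvPolynomial (Fin n) k}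
    (h : F.IsHomogeneous 1) :
    F = linForm (fun j => coeff (Finsupp.single j 1) F) := by
  classical
  apply MvPolynomial.ext
  intro m
  by_cases hm : ∃ j, m = Finsupp.single j 1
  · obtain ⟨j, rfl⟩ := hm
    rw [coeff_linForm_single]
  · have hdeg : m.degree ≠ 1 := fun hd => hm (degree_eq_one_exists hd)
    rw [h.coeff_eq_zero hdeg]
    rw [linForm, coeff_sum]
    symm
    apply Finset.sum_eq_zero
    intro j _
    rw [coeff_C_mul, coeff_X']
    rw [if_neg (fun he => hm ⟨j, he.symm⟩), mul_zero]

/-- A homogeneous degree–0 polynomial is constant. -/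
lemma isHomogeneous_zero_eq_C {n : ℕ} {F : MvPolynomial (Fin n) k}
    (h : F.IsHomogeneous 0) : F = C (coeff 0 F) := by
  have h1 : homogeneousComponent 0 F = F := by
    rw [homogeneousComponent_of_mem h, if_pos rfl]
  conv_lhs => rw [← h1, homogeneousComponent_zero]

/-- A cofactor of a nonzero linear form in a homogeneous polynomial of degree `d+1`
is homogeneous of degree `d`. -/
lemma factor_isHomogeneous {n : ℕ} {lam g : MvPolynomial (Fin n) k}
    (hlam : lam.IsHomogeneous 1) (hl0 : lam ≠ 0) {d : ℕ}
    (h : (lam * g).IsHomogeneous (d + 1)) : g.IsHomogeneous d := by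
  classical
  have hcomp : ∀ m : ℕ, m ≠ d → homogeneousComponent m g = 0 := by
    intro m hm
    have h1 : homogeneousComponent (m + 1) (lam * g) = lam * homogeneousComponent m g := by
      conv_lhs => rw [← sum_homogeneousComponent g, Finset.mul_sum, map_sum]
      have hterm : ∀ i : ℕ,
          homogeneousComponent (m + 1) (lam * homogeneousComponent i g) =
            if m = i then lam * homogeneousComponent i g else 0 := by
        intro i
        have hmem : lam * homogeneousComponent i g ∈
            homogeneousSubmodule (Fin n) k (1 + i) :=
          hlam.mul (homogeneousComponent_isHomogeneous i g)
        rw [homogeneousComponent_of_mem hmem]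
        congr 1
        simp only [eq_iff_iff]
        omega
      simp_rw [hterm]
      rw [Finset.sum_ite_eq]
      by_cases hmr : m ∈ Finset.range (g.totalDegree + 1)
      · rw [if_pos hmr]
      · rw [if_neg hmr, homogeneousComponent_eq_zero, mul_zero]
        simp only [Finset.mem_range, not_lt] at hmr
        omega
    have h2 : homogeneousComponent (m + 1) (lam * g) = 0 := by
      rw [homogeneousComponent_of_mem h, if_neg (by omega)]
    rw [h2] at h1
    rcases mul_eq_zero.mp h1.symm with hc | hc
    · exact absurd hc hl0
    · exact hc
  have hg : g = ∑ i ∈ Finset.range (g.totalDegree + 1), homogeneousComponent i g :=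
    (sum_homogeneousComponent g).symm
  rw [hg]
  apply IsHomogeneous.sum
  intro i _
  by_cases hi : i = d
  · subst hi; exact homogeneousComponent_isHomogeneous i g
  · rw [hcomp i hi]; exact isHomogeneous_zero _ _ _

lemma hyperplane_dvd_aux [Infinite k] {n : ℕ} (hn : 1 ≤ n) (c : Fin (n + 1) → k)
    (hc0 : c 0 ≠ 0) (F : MvPolynomial (Fin (n + 1)) k)
    (hv : ∀ v : Fin (n + 1) → k, v ≠ 0 → (∑ j, c j * v j) = 0 → eval v F = 0) :
    linForm c ∣ F := by
  classical
  haveI : NeZero n := ⟨by omega⟩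
  set φ := finSuccEquiv k n with hφ
  set μ : MvPolynomial (Fin n) k := linForm (fun j => c j.succ) with hμ
  set t : MvPolynomial (Fin n) k := C (-(c 0)⁻¹) * μ with ht
  -- image of the linear form
  have hlin : φ (linForm c) = Polynomial.C (C (c 0)) * (Polynomial.X - Polynomial.C t) := by
    have hsplit : linForm c = C (c 0) * X 0 + ∑ j : Fin n, C (c j.succ) * X j.succ := by
      rw [linForm, Fin.sum_univ_succ]
    rw [hsplit, map_add, map_mul, map_sum]
    have hC : ∀ a : k, φ (C a) = Polynomial.C (C a) := by
      intro a; simp [hφ, finSuccEquiv_apply]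
    rw [hC, finSuccEquiv_X_zero]
    have hterm : ∀ j : Fin n, φ (C (c j.succ) * X j.succ)
        = Polynomial.C (C (c j.succ) * X j) := by
      intro j
      rw [map_mul, hC, finSuccEquiv_X_succ, ← Polynomial.C_mul]
    simp_rw [hterm]
    rw [← map_sum Polynomial.C]
    have hμ' : (∑ j : Fin n, C (c j.succ) * X j) = μ := rfl
    rw [hμ', mul_sub, ← Polynomial.C_mul, ht]
    have : C (c 0) * (C (-(c 0)⁻¹) * μ) = -μ := by
      rw [← mul_assoc, ← map_mul]
      rw [mul_neg, mul_inv_cancel₀ hc0]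
      simp
    rw [this, map_neg]
    ring
  -- the evaluation of φ F at t is the zero polynomial
  have hroot : Polynomial.eval t (φ F) = 0 := by
    have hw : ∀ w : Fin n → k, w ≠ 0 → eval w (Polynomial.eval t (φ F)) = 0 := by
      intro w hw0
      have hcomm : eval w (Polynomial.eval t (φ F))
          = Polynomial.eval₂ (eval w : MvPolynomial (Fin n) k →+* k) (eval w t) (φ F) :=
        (Polynomial.eval₂_hom (eval w : MvPolynomial (Fin n) k →+* k) t).symm
      have hkey : eval w (Polynomial.eval t (φ F)) = eval (Fin.cons (eval w t) w) F := by
        rw [hcomm, eval_eq_eval_mv_eval', Polynomial.eval_map]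
      have hvne : (Fin.cons (eval w t) w : Fin (n + 1) → k) ≠ 0 := by
        intro h0
        apply hw0
        funext i
        have := congrFun h0 i.succ
        simpa [Fin.cons_succ] using this
      have hsum : ∑ j, c j * (Fin.cons (eval w t) w : Fin (n + 1) → k) j = 0 := by
        rw [Fin.sum_univ_succ]
        simp only [Fin.cons_zero, Fin.cons_succ]
        rw [ht, map_mul, eval_C, hμ, eval_linForm]
        field_simp
        ring
      rw [hkey]
      exact hv _ hvne hsum
    have hX : ∀ w : Fin n → k, eval w (X 0 * Polynomial.eval t (φ F)) = eval w 0 := by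
      intro w
      rw [eval_mul, eval_X, map_zero]
      by_cases hw0 : w = 0
      · subst hw0; simp
      · rw [hw w hw0, mul_zero]
    have h0 : X 0 * Polynomial.eval t (φ F) = 0 := MvPolynomial.funext hX
    rcases mul_eq_zero.mp h0 with hc | hc
    · exact absurd hc (X_ne_zero 0)
    · exact hc
  have hdvd : Polynomial.X - Polynomial.C t ∣ φ F := Polynomial.dvd_iff_isRoot.mpr hroot
  obtain ⟨q, hq⟩ := hdvd
  have hFeq : φ F = φ (linForm c) * (Polynomial.C (C (c 0)⁻¹) * q) := by
    rw [hlin, hq]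
    rw [show Polynomial.C (C (c 0)) * (Polynomial.X - Polynomial.C t) *
        (Polynomial.C (C ((c 0)⁻¹)) * q)
        = (Polynomial.C (C (c 0)) * Polynomial.C (C ((c 0)⁻¹))) *
          ((Polynomial.X - Polynomial.C t) * q) by ring]
    rw [← Polynomial.C_mul, ← map_mul, mul_inv_cancel₀ hc0]
    simp
  refine ⟨φ.symm (Polynomial.C (C (c 0)⁻¹) * q), ?_⟩
  have := congrArg φ.symm hFeq
  rw [AlgEquiv.symm_apply_apply, map_mul, AlgEquiv.symm_apply_apply] at this
  exact this

lemma rename_linForm_comp {n : ℕ} (σe : Equiv.Perm (Fin n)) (c : Fin n → k) :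
    rename σe (linForm (fun j => c (σe j))) = linForm c := by
  rw [linForm, map_sum]
  simp_rw [map_mul, rename_C, rename_X]
  exact Equiv.sum_comp σe (fun j => C (c j) * X j)

/-- If a polynomial vanishes at every nonzero point of the hyperplane defined by a nonzero
linear form, then the linear form divides it. -/
lemma hyperplane_dvd [Infinite k] {n : ℕ} (hn : 1 ≤ n) (c : Fin (n + 1) → k)
    (hc : c ≠ 0) (F : MvPolynomial (Fin (n + 1)) k)
    (hv : ∀ v : Fin (n + 1) → k, v ≠ 0 → (∑ j, c j * v j) = 0 → eval v F = 0) :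
    linForm c ∣ F := by
  classical
  obtain ⟨i0, hi0⟩ : ∃ i0, c i0 ≠ 0 := by
    by_contra hall
    push_neg at hall
    exact hc (funext hall)
  set σe : Equiv.Perm (Fin (n + 1)) := Equiv.swap 0 i0 with hσ
  have hσσ : ∀ x, σe (σe x) = x := fun x => Equiv.swap_apply_self _ _ _
  have key : linForm (fun j => c (σe j)) ∣ rename σe F := by
    apply hyperplane_dvd_aux hn _ (by simpa [hσ] using hi0)
    intro v hv0 hsum
    rw [eval_rename]
    have hvσ : (v ∘ σe : Fin (n + 1) → k) ≠ 0 := by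
      intro h0
      apply hv0
      funext i
      have := congrFun h0 (σe i)
      simpa [hσσ] using this
    apply hv _ hvσ
    calc ∑ j, c j * (v ∘ σe) j = ∑ j, c (σe j) * (v ∘ σe) (σe j) :=
          (Equiv.sum_comp σe (fun j => c j * (v ∘ σe) j)).symm
      _ = ∑ j, c (σe j) * v j := by simp_rw [Function.comp_apply, hσσ]
      _ = 0 := hsum
  obtain ⟨q, hq⟩ := key
  refine ⟨rename σe q, ?_⟩
  have := congrArg (rename σe) hq
  rw [map_mul, rename_linForm_comp] at this
  rw [← this, rename_rename]
  have hid : (σe ∘ σe : Fin (n + 1) → Fin (n + 1)) = id := funext fun x => hσσ x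
  rw [hid, rename_id, AlgHom.id_apply]

/-- A homogeneous binary form of degree `d` vanishing on more than `d` pairwise
non-proportional lines is zero. -/
lemma binary_homog_zero [Infinite k] :
    ∀ d n : ℕ, ∀ w : Fin n → Fin 2 → k, (∀ j, w j ≠ 0) →
      (∀ j j' : Fin n, j ≠ j' → ∀ a : k, w j ≠ a • w j') →
      ∀ g : MvPolynomial (Fin 2) k, g.IsHomogeneous d →
        (∀ (j : Fin n) (a : k), a ≠ 0 → eval (a • w j) g = 0) → d < n → g = 0 := by
  intro d
  induction d with
  | zero =>
    intro n w hw _ g hg hv hdn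
    have hj : (0 : ℕ) < n := hdn
    set j0 : Fin n := ⟨0, hj⟩
    have := hv j0 1 one_ne_zero
    rw [one_smul, isHomogeneous_zero_eq_C hg] at this
    rw [eval_C] at this
    rw [isHomogeneous_zero_eq_C hg, this, map_zero]
  | succ d ih =>
    intro n w hw hnp g hg hv hdn
    obtain ⟨m, rfl⟩ : ∃ m, n = m + 1 := ⟨n - 1, by omega⟩
    set j0 : Fin (m + 1) := 0
    set cvec : Fin 2 → k := ![w j0 1, -(w j0 0)] with hcvec
    have hcv : cvec ≠ 0 := by
      intro h0
      apply hw j0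
      funext i
      fin_cases i
      · have := congrFun h0 1
        simpa [hcvec] using this
      · have := congrFun h0 0
        simpa [hcvec] using this
    have hdvd : linForm cvec ∣ g := by
      apply hyperplane_dvd le_rfl cvec hcv
      intro v hv0 hsum
      rw [Fin.sum_univ_two] at hsum
      have hcross : w j0 1 * v 0 - w j0 0 * v 1 = 0 := by
        simpa [hcvec, sub_eq_add_neg, neg_mul] using hsum
      obtain ⟨a, ha⟩ := cross_zero_proportional (hw j0) hcross
      have ha0 : a ≠ 0 := by
        rintro rfl
        rw [zero_smul] at ha
        exact hv0 ha
      rw [ha]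
      exact hv j0 a ha0
    obtain ⟨g₁, hg₁⟩ := hdvd
    have hg₁hom : g₁.IsHomogeneous d :=
      factor_isHomogeneous (linForm_isHomogeneous cvec) (linForm_ne_zero hcv) (hg₁ ▸ hg)
    have hvan₁ : ∀ (j : Fin m) (a : k), a ≠ 0 → eval (a • w j.succ) g₁ = 0 := by
      intro j a ha
      have hev := hv j.succ a ha
      rw [hg₁, eval_mul] at hev
      have hlv : eval (a • w j.succ) (linForm cvec) ≠ 0 := by
        rw [eval_linForm, Fin.sum_univ_two]
        simp only [Pi.smul_apply, smul_eq_mul, hcvec]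
        intro hz
        have hcross : w j0 1 * w j.succ 0 - w j0 0 * w j.succ 1 = 0 := by
          have : a * (w j0 1 * w j.succ 0 - w j0 0 * w j.succ 1) = 0 := by
            rw [← hz]
            simp [Matrix.cons_val_zero, Matrix.cons_val_one]
            ring
          rcases mul_eq_zero.mp this with h | h
          · exact absurd h ha
          · exact h
        obtain ⟨b, hb⟩ := cross_zero_proportional (hw j0) hcross
        exact hnp j.succ j0 (Fin.succ_ne_zero j) b hb
      rcases mul_eq_zero.mp hev with h | h
      · exact absurd h hlv
      · exact h
    have hg₁0 : g₁ = 0 := by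
      apply ih m (fun j => w j.succ) (fun j => hw j.succ)
        (fun j j' hjj a => hnp j.succ j'.succ (by simpa using hjj) a) g₁ hg₁hom hvan₁
        (by omega)
    rw [hg₁, hg₁0, mul_zero]

lemma indep_coeff3 {ca cb cc : Fin 3 → k}
    (h : LinearIndependent k ![linForm ca, linForm cb, linForm cc]) :
    LinearIndependent k ![ca, cb, cc] := by
  apply LinearIndependent.of_comp (linFormL 3)
  have he : (linFormL 3 ∘ ![ca, cb, cc] : Fin 3 → MvPolynomial (Fin 3) k)
      = ![linForm ca, linForm cb, linForm cc] := by
    funext i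
    fin_cases i <;> rfl
  rwa [he]

/-- A parametrization of the plane `{x | ∑ c j * x j = 0}` in `k³` for `c ≠ 0`. -/
lemma plane_basis {c : Fin 3 → k} (hc : c ≠ 0) :
    ∃ w : Fin 2 → (Fin 3 → k),
      (∀ x : Fin 3 → k, (∑ j, c j * x j) = 0 →
        ∃ s : Fin 2 → k, x = s 0 • w 0 + s 1 • w 1) ∧
      (∀ s : Fin 2 → k, (∑ j, c j * (s 0 • w 0 + s 1 • w 1) j) = 0) ∧
      (∀ s : Fin 2 → k, s 0 • w 0 + s 1 • w 1 = 0 → s = 0) := by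
  classical
  obtain ⟨j0, hj0⟩ : ∃ j0, c j0 ≠ 0 := by
    by_contra hall
    push_neg at hall
    exact hc (funext hall)
  have hsurj : Function.Surjective (dotL c) := by
    intro y
    refine ⟨(y * (c j0)⁻¹) • (Pi.single j0 1 : Fin 3 → k), ?_⟩
    rw [dotL_apply]
    rw [Finset.sum_eq_single j0]
    · simp only [Pi.smul_apply, Pi.single_eq_same, smul_eq_mul, mul_one]
      field_simp
    · intro i _ hij
      simp [Pi.single_eq_of_ne hij]
    · simp
  have hrank : Module.finrank k (LinearMap.ker (dotL c)) = 2 := by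
    have h1 := LinearMap.finrank_range_add_finrank_ker (dotL c)
    rw [LinearMap.range_eq_top.mpr hsurj, finrank_top] at h1
    have h2 : Module.finrank k (Fin 3 → k) = 3 := by
      simp [Module.finrank_pi]
    have h3 : Module.finrank k k = 1 := Module.finrank_self k
    omega
  set K := LinearMap.ker (dotL c) with hK
  let b : Module.Basis (Fin 2) k K := Module.finBasisOfFinrankEq k K hrank
  refine ⟨fun i => (b i : Fin 3 → k), ?_, ?_, ?_⟩
  · intro x hx
    have hxK : x ∈ K := by rwa [hK, LinearMap.mem_ker, dotL_apply]
    refine ⟨fun i => b.repr ⟨x, hxK⟩ i, ?_⟩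
    have hsum := b.sum_repr ⟨x, hxK⟩
    have h2 := congrArg (Subtype.val) hsum
    rw [Fin.sum_univ_two] at h2
    simp only [Submodule.coe_add, Submodule.coe_smul] at h2
    exact h2.symm
  · intro s
    have h0 : ∀ i : Fin 2, dotL c ((b i : Fin 3 → k)) = 0 := fun i => (b i).2
    have hd : dotL c (s 0 • (b 0 : Fin 3 → k) + s 1 • (b 1 : Fin 3 → k)) = 0 := by
      rw [map_add, map_smul, map_smul, h0, h0]
      simp
    rwa [dotL_apply] at hd
  · intro s hs
    have hz : (∑ i, s i • b i) = (0 : K) := by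
      apply Subtype.ext
      rw [Fin.sum_univ_two]
      simp only [Submodule.coe_add, Submodule.coe_smul, ZeroMemClass.coe_zero]
      exact hs
    have hli := Fintype.linearIndependent_iff.mp b.linearIndependent s hz
    funext i
    exact hli i

lemma aux [IsAlgClosed k] :
    ∀ d l : ℕ, 2 ≤ l → ∀ L : Fin l → MvPolynomial (Fin 3) k,
      (∀ i, (L i).IsHomogeneous 1) →
      (∀ a b : Fin l, a ≠ b → LinearIndependent k ![L a, L b]) →
      (∀ a b c : Fin l, a ≠ b → a ≠ c → b ≠ c → LinearIndependent k ![L a, L b, L c]) →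
      ∀ F : MvPolynomial (Fin 3) k, F.IsHomogeneous d →
        (∀ v ∈ starCone L, eval v F = 0) → d + 1 < l → F = 0 := by
  intro d
  induction d with
  | zero =>
    intro l hl L hhom h2 h3 F hF hvan hd
    set cc : Fin l → Fin 3 → k := fun i j => coeff (Finsupp.single j 1) (L i) with hcc
    have hrepr : ∀ i, L i = linForm (cc i) := fun i => isHomogeneous_one_repr (hhom i)
    have heval : ∀ i v, eval v (L i) = ∑ j, cc i j * v j := fun i v => by
      rw [hrepr i, eval_linForm]
    set i0 : Fin l := ⟨0, by omega⟩
    set i1 : Fin l := ⟨1, by omega⟩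
    have h01 : i0 ≠ i1 := by simp [i0, i1, Fin.ext_iff]
    obtain ⟨v, hv0, hd0, hd1⟩ := exists_common_zero (cc i0) (cc i1)
    have hvc : v ∈ starCone L :=
      ⟨hv0, i0, i1, h01, by rw [heval]; exact hd0, by rw [heval]; exact hd1⟩
    have hev := hvan v hvc
    rw [isHomogeneous_zero_eq_C hF] at hev ⊢
    rw [eval_C] at hev
    rw [hev, map_zero]
  | succ d ih =>
    intro l hl L hhom h2 h3 F hF hvan hd
    obtain ⟨m, rfl⟩ : ∃ m, l = m + 1 := ⟨l - 1, by omega⟩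
    set cc : Fin (m + 1) → Fin 3 → k := fun i j => coeff (Finsupp.single j 1) (L i) with hcc
    have hrepr : ∀ i, L i = linForm (cc i) := fun i => isHomogeneous_one_repr (hhom i)
    have heval : ∀ i v, eval v (L i) = ∑ j, cc i j * v j := fun i v => by
      rw [hrepr i, eval_linForm]
    have hscale : ∀ (cv : Fin 3 → k) (a : k) (x : Fin 3 → k),
        (∑ i, cv i * (a • x) i) = a * ∑ i, cv i * x i := by
      intro cv a x
      rw [Finset.mul_sum]
      apply Finset.sum_congr rfl
      intro i _
      simp only [Pi.smul_apply, smul_eq_mul]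
      ring
    have h01 : (0 : Fin (m + 1)) ≠ ⟨1, by omega⟩ := by simp [Fin.ext_iff]
    have hL0 : L 0 ≠ 0 := by
      have := (h2 0 ⟨1, by omega⟩ h01).ne_zero 0
      simpa using this
    have hc0 : cc 0 ≠ 0 := by
      intro h
      apply hL0
      rw [hrepr 0, h]
      simp [linForm]
    obtain ⟨w, hrepr2, hvanplane, hinj⟩ := plane_basis hc0
    have htrip : ∀ a b : Fin (m + 1), a ≠ b → 0 ≠ a → 0 ≠ b → ∀ x : Fin 3 → k,
        (∑ j, cc 0 j * x j) = 0 → (∑ j, cc a j * x j) = 0 → (∑ j, cc b j * x j) = 0 →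
        x = 0 := by
      intro a b hab h0a h0b x hx0 hxa hxb
      refine triple_indep_zero ?_ hx0 hxa hxb
      apply indep_coeff3
      have heq : ![linForm (cc 0), linForm (cc a), linForm (cc b)] = ![L 0, L a, L b] := by
        funext i
        fin_cases i <;> simp [hrepr]
      rw [heq]
      exact h3 0 a b h0a h0b hab
    have hpts : ∀ j : Fin m, ∃ x : Fin 3 → k, x ≠ 0 ∧ (∑ i, cc 0 i * x i) = 0 ∧
        (∑ i, cc j.succ i * x i) = 0 := fun j => exists_common_zero _ _
    choose v hvne hv0 hvs using hpts
    have hsx : ∀ j : Fin m, ∃ s : Fin 2 → k, v j = s 0 • w 0 + s 1 • w 1 :=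
      fun j => hrepr2 (v j) (hv0 j)
    choose u hu using hsx
    set gsub : Fin 3 → MvPolynomial (Fin 2) k :=
      fun r => C (w 0 r) * X 0 + C (w 1 r) * X 1 with hgsub
    set G : MvPolynomial (Fin 2) k := aeval gsub F with hG
    have hGhom : G.IsHomogeneous (d + 1) := by
      have := hF.aeval gsub (n := 1)
        (fun r => ((isHomogeneous_X _ 0).C_mul (w 0 r)).add ((isHomogeneous_X _ 1).C_mul (w 1 r)))
      simpa [hG] using this
    have hGeval : ∀ s : Fin 2 → k, eval s G = eval (s 0 • w 0 + s 1 • w 1) F := by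
      intro s
      rw [hG, aeval_def, eval_eval₂]
      have hcomp : (eval s).comp (algebraMap k (MvPolynomial (Fin 2) k)) = RingHom.id k := by
        ext a
        simp
      rw [hcomp, eval₂_id]
      have hfun : (fun r => eval s (gsub r)) = (s 0 • w 0 + s 1 • w 1) := by
        funext r
        simp only [hgsub, map_add, map_mul, eval_C, eval_X, Pi.add_apply, Pi.smul_apply,
          smul_eq_mul]
        ring
      rw [hfun]
    have hcomb : ∀ (a : k) (s : Fin 2 → k),
        (a • s) 0 • w 0 + (a • s) 1 • w 1 = a • (s 0 • w 0 + s 1 • w 1) := by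
      intro a s
      rw [smul_add, smul_smul, smul_smul]
      simp only [Pi.smul_apply, smul_eq_mul]
    have hu_ne : ∀ j, u j ≠ 0 := by
      intro j h
      apply hvne j
      rw [hu j, h]
      simp
    have hGvan : ∀ (j : Fin m) (a : k), a ≠ 0 → eval (a • u j) G = 0 := by
      intro j a ha
      rw [hGeval]
      have hpt : (a • u j) 0 • w 0 + (a • u j) 1 • w 1 = a • v j := by
        rw [hcomb, ← hu j]
      rw [hpt]
      apply hvan
      refine ⟨smul_ne_zero ha (hvne j), 0, j.succ, (Fin.succ_ne_zero j).symm, ?_, ?_⟩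
      · rw [heval, hscale, hv0 j, mul_zero]
      · rw [heval, hscale, hvs j, mul_zero]
    have hnp : ∀ j j' : Fin m, j ≠ j' → ∀ a : k, u j ≠ a • u j' := by
      intro j j' hjj a heq
      have hvv : v j = a • v j' := by
        rw [hu j, heq, hcomb, ← hu j']
      apply hvne j
      refine htrip j.succ j'.succ (by simpa [Fin.succ_inj] using hjj)
        (Fin.succ_ne_zero j).symm (Fin.succ_ne_zero j').symm (v j) (hv0 j) (hvs j) ?_
      rw [hvv, hscale, hvs j', mul_zero]
    have hG0 : G = 0 := binary_homog_zero (d + 1) m u hu_ne hnp G hGhom hGvan (by omega)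
    have hFplane : ∀ x : Fin 3 → k, x ≠ 0 → (∑ j, cc 0 j * x j) = 0 → eval x F = 0 := by
      intro x _ hx
      obtain ⟨s, hsx2⟩ := hrepr2 x hx
      rw [hsx2, ← hGeval s, hG0, map_zero]
    have hdvd : linForm (cc 0) ∣ F := hyperplane_dvd (by omega) (cc 0) hc0 F hFplane
    obtain ⟨F₁, hF₁⟩ := hdvd
    have hF₁hom : F₁.IsHomogeneous d :=
      factor_isHomogeneous (linForm_isHomogeneous _) (linForm_ne_zero hc0) (hF₁ ▸ hF)
    have hvan' : ∀ x ∈ starCone (fun j : Fin m => L j.succ), eval x F₁ = 0 := by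
      rintro x ⟨hx0, a, b, hab, hea, heb⟩
      have hL0x : eval x (L 0) ≠ 0 := by
        rw [heval]
        intro h0
        apply hx0
        refine htrip a.succ b.succ (by simpa [Fin.succ_inj] using hab)
          (Fin.succ_ne_zero a).symm (Fin.succ_ne_zero b).symm x h0 ?_ ?_
        · rw [← heval]; exact hea
        · rw [← heval]; exact heb
      have hFx : eval x F = 0 := by
        apply hvan
        exact ⟨hx0, a.succ, b.succ, by simpa [Fin.succ_inj] using hab, hea, heb⟩
      rw [hF₁, eval_mul] at hFx
      rcases mul_eq_zero.mp hFx with h | h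
      · exfalso
        apply hL0x
        rw [hrepr 0]
        exact h
      · exact h
    have hF₁0 : F₁ = 0 := by
      refine ih m (by omega) (fun j => L j.succ) (fun j => hhom j.succ) ?_ ?_ F₁ hF₁hom hvan'
        (by omega)
      · intro a b hab
        exact h2 a.succ b.succ (by simpa [Fin.succ_inj] using hab)
      · intro a b c hab hac hbc
        exact h3 a.succ b.succ c.succ (by simpa [Fin.succ_inj] using hab)
          (by simpa [Fin.succ_inj] using hac) (by simpa [Fin.succ_inj] using hbc)
    rw [hF₁, hF₁0, mul_zero]

end StarAux

/-- If a homogeneous form `F` of degree `d` vanishes on the star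
configuration `𝕏(l)` and `d < l − 1`, then `F` is divisible by each of the `l` linear forms
`L_i`; consequently `F = 0`: no nonzero curve of degree `d < l − 1` contains `𝕏(l)`. -/
theorem no_small_degree_curve_contains_star {k : Type*} [Field k] [IsAlgClosed k]
    (l d : ℕ) (hl : 2 ≤ l) (L : Fin l → MvPolynomial (Fin 3) k)
    (hhom : ∀ i, (L i).IsHomogeneous 1)
    (h2 : ∀ a b : Fin l, a ≠ b → LinearIndependent k ![L a, L b])
    (h3 : ∀ a b c : Fin l, a ≠ b → a ≠ c → b ≠ c → LinearIndependent k ![L a, L b, L c])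
    (F : MvPolynomial (Fin 3) k) (hF : F.IsHomogeneous d)
    (hFvan : F ∈ vanishingIdealOf (starCone L)) (hd : d < l - 1) :
    (∀ i : Fin l, L i ∣ F) ∧ F = 0 := by
  have hF0 : F = 0 :=
    StarAux.aux d l hl L hhom h2 h3 F hF (fun v hv => hFvan v hv) (by omega)
  exact ⟨fun i => by rw [hF0]; exact dvd_zero _, hF0⟩
end

section
/- Let L₁,…,L_l be three-wise linearly independent linear forms in S = k[x₀,x₁,x₂] with l ≥ 2, let L̂_i = ∏_{j≠i} L_j, and let I_{𝕏(l)} be the vanishing ideal of the star configuration 𝕏(l). Then I_{𝕏(l)} = (L̂₁, L̂₂, …, L̂_l). -/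
open MvPolynomial Finset


open MvPolynomial Finset Matrix

namespace StarCfg

variable {k : Type*} [Field k]

/-- The linear form with coefficient vector `c`. -/
noncomputable def linForm (c : Fin 3 → k) : MvPolynomial (Fin 3) k :=
  ∑ i, C (c i) * X i

lemma eval_linForm (c v : Fin 3 → k) : eval v (linForm c) = c ⬝ᵥ v := by
  simp [linForm, dotProduct]

lemma aeval_linForm (g : Fin 3 → MvPolynomial (Fin 3) k) (c : Fin 3 → k) :
    aeval g (linForm c) = ∑ i, C (c i) * g i := by
  simp [linForm]

lemma coeff_linForm (c : Fin 3 → k) (i : Fin 3) :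
    coeff (Finsupp.single i 1) (linForm c) = c i := by
  simp [linForm, coeff_sum, coeff_C_mul, coeff_X',
    Finsupp.single_left_inj (one_ne_zero (α := ℕ))]

lemma linForm_injective : Function.Injective (linForm (k := k)) := by
  intro a b h
  funext i
  rw [← coeff_linForm a i, ← coeff_linForm b i, h]

lemma linForm_zero : linForm (0 : Fin 3 → k) = 0 := by simp [linForm]

lemma linForm_ne_zero {c : Fin 3 → k} (hc : c ≠ 0) : linForm c ≠ 0 := fun h =>
  hc (linForm_injective (h.trans linForm_zero.symm))

lemma linForm_add (c d : Fin 3 → k) : linForm (c + d) = linForm c + linForm d := by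
  simp [linForm, add_mul, Finset.sum_add_distrib]

lemma linForm_smul (a : k) (c : Fin 3 → k) : linForm (a • c) = C a * linForm c := by
  simp [linForm, Finset.mul_sum, mul_assoc]

lemma linForm_single (i : Fin 3) : linForm (Pi.single i (1:k)) = X i := by
  simp [linForm, Pi.single_apply, apply_ite (C (R := k) (σ := Fin 3))]

/-- Substitution along the rows of the matrix `A` : `X i ↦ linForm (A i)`. -/
noncomputable def polyMap (A : Matrix (Fin 3) (Fin 3) k) :
    MvPolynomial (Fin 3) k →ₐ[k] MvPolynomial (Fin 3) k :=
  aeval fun i => linForm (A i)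

lemma polyMap_X (A : Matrix (Fin 3) (Fin 3) k) (i : Fin 3) :
    polyMap A (X i) = linForm (A i) := by simp [polyMap]

lemma eval_aeval' (v : Fin 3 → k) (g : Fin 3 → MvPolynomial (Fin 3) k)
    (F : MvPolynomial (Fin 3) k) :
    eval v (aeval g F) = eval (fun i => eval v (g i)) F := by
  rw [aeval_def, eval_eval₂]
  have h1 : (eval v).comp (algebraMap k (MvPolynomial (Fin 3) k)) = RingHom.id k := by
    ext a; simp
  rw [h1]
  exact eval₂_id _

lemma eval_polyMap (A : Matrix (Fin 3) (Fin 3) k) (v : Fin 3 → k)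
    (F : MvPolynomial (Fin 3) k) :
    eval v (polyMap A F) = eval (A *ᵥ v) F := by
  rw [polyMap, eval_aeval']
  have : (fun i => eval v (linForm (A i))) = A *ᵥ v := by
    funext i; simp [eval_linForm, Matrix.mulVec]
  rw [this]

lemma polyMap_linForm (A : Matrix (Fin 3) (Fin 3) k) (c : Fin 3 → k) :
    polyMap A (linForm c) = linForm (c ᵥ* A) := by
  rw [polyMap, aeval_linForm]
  simp only [linForm, Finset.mul_sum, Matrix.vecMul, dotProduct]
  rw [Finset.sum_comm]
  congr 1; funext j
  simp only [← mul_assoc, ← C_mul]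
  rw [← Finset.sum_mul]
  congr 1
  exact (map_sum C _ _).symm

lemma polyMap_comp (A B : Matrix (Fin 3) (Fin 3) k) :
    (polyMap A).comp (polyMap B) = polyMap (B * A) := by
  apply MvPolynomial.algHom_ext
  intro i
  simp only [AlgHom.comp_apply, polyMap_X, polyMap_linForm]
  exact congrArg linForm (by funext j; simp [Matrix.vecMul, Matrix.mul_apply, dotProduct])


lemma polyMap_one : (polyMap (1 : Matrix (Fin 3) (Fin 3) k)) = AlgHom.id k _ := by
  apply MvPolynomial.algHom_ext
  intro i
  simp only [polyMap_X, AlgHom.id_apply]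
  rw [show (1 : Matrix (Fin 3) (Fin 3) k) i = Pi.single i 1 from _root_.funext fun j => by
      simp [Matrix.one_apply, Pi.single_apply, eq_comm], linForm_single]

/-- The algebra equivalence given by an invertible substitution. -/
noncomputable def polyEquiv (A B : Matrix (Fin 3) (Fin 3) k) (hAB : A * B = 1)
    (hBA : B * A = 1) : MvPolynomial (Fin 3) k ≃ₐ[k] MvPolynomial (Fin 3) k :=
  AlgEquiv.ofAlgHom (polyMap A) (polyMap B)
    (by rw [polyMap_comp, hBA, polyMap_one])
    (by rw [polyMap_comp, hAB, polyMap_one])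

end StarCfg
section Chunk2

open MvPolynomial Finset Matrix
namespace StarCfg

variable {k : Type*} [Field k]

lemma mem_span_iff_image {S : Type*} [CommRing S] (e : S ≃+* S) (T : Set S) (F : S) :
    F ∈ Ideal.span T ↔ e F ∈ Ideal.span (e '' T) := by
  constructor
  · intro h
    have := Ideal.mem_map_of_mem (e : S →+* S) h
    rwa [Ideal.map_span] at this
  · intro h
    have := Ideal.mem_map_of_mem (e.symm : S →+* S) h
    rw [Ideal.map_span] at this
    simp only [← Set.image_comp] at this
    simpa using this

/-- Killing the variables in `s` changes `F` only by an element of the ideal they generate. -/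
lemma sub_aeval_mem (s : Finset (Fin 3)) (F : MvPolynomial (Fin 3) k) :
    F - aeval (fun i => if i ∈ s then 0 else X i) F ∈
      Ideal.span ((fun i => (X i : MvPolynomial (Fin 3) k)) '' ↑s) := by
  induction F using MvPolynomial.induction_on with
  | C a => simp
  | add p q hp hq =>
      have : p + q - aeval (fun i => if i ∈ s then 0 else X i) (p + q) =
          (p - aeval (fun i => if i ∈ s then 0 else X i) p) +
          (q - aeval (fun i => if i ∈ s then 0 else X i) q) := by
        rw [map_add]; ring
      rw [this]
      exact Ideal.add_mem _ hp hq
  | mul_X p i hp =>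
      by_cases hi : i ∈ s
      · have hXi : (X i : MvPolynomial (Fin 3) k) ∈
            Ideal.span ((fun i => (X i : MvPolynomial (Fin 3) k)) '' ↑s) :=
          Ideal.subset_span ⟨i, by simpa using hi⟩
        have : p * X i - aeval (fun i => if i ∈ s then 0 else X i) (p * X i) = p * X i := by
          rw [_root_.map_mul, aeval_X, if_pos hi, mul_zero, sub_zero]
        rw [this]
        exact Ideal.mul_mem_left _ _ hXi
      · have : p * X i - aeval (fun i => if i ∈ s then 0 else X i) (p * X i) =
            (p - aeval (fun i => if i ∈ s then 0 else X i) p) * X i := by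
          rw [_root_.map_mul, aeval_X, if_neg hi]; ring
        rw [this]
        exact Ideal.mul_mem_right _ _ hp

lemma eval_eq_zero_all [Infinite k] (F : MvPolynomial (Fin 3) k)
    (h : ∀ v : Fin 3 → k, eval v F = 0) : F = 0 :=
  MvPolynomial.funext fun v => by rw [h v, map_zero]

/-- Divisibility criterion: a polynomial vanishing on the hyperplane `c ⬝ᵥ v = 0`
is divisible by `linForm c`.  (Needs the matrix `A` with first row `c`.) -/
lemma linForm_dvd_of_vanish [Infinite k] (A : Matrix (Fin 3) (Fin 3) k)
    (hA : IsUnit A.det) (F : MvPolynomial (Fin 3) k)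
    (h : ∀ v, A 0 ⬝ᵥ v = 0 → eval v F = 0) : linForm (A 0) ∣ F := by
  set B := A⁻¹ with hB
  have hAB : A * B = 1 := Matrix.mul_nonsing_inv A hA
  have hBA : B * A = 1 := Matrix.nonsing_inv_mul A hA
  set G := polyMap B F with hG
  have hrow : A 0 ᵥ* B = Pi.single 0 1 := by
    have h1 : (Pi.single 0 1 : Fin 3 → k) ᵥ* A = A 0 := by
      funext j; simp [Matrix.vecMul, single_dotProduct]
    rw [← h1, Matrix.vecMul_vecMul, hAB, Matrix.vecMul_one]
  -- G vanishes on v 0 = 0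
  have hGvan : ∀ v : Fin 3 → k, v 0 = 0 → eval v G = 0 := by
    intro v hv
    rw [hG, eval_polyMap]
    apply h
    rw [Matrix.dotProduct_mulVec, hrow, single_dotProduct, one_mul, hv]
  -- the substitution X 0 ↦ 0 kills G
  have hsub : aeval (fun i => if i ∈ ({0} : Finset (Fin 3)) then 0
      else X i : Fin 3 → MvPolynomial (Fin 3) k) G = 0 := by
    apply eval_eq_zero_all (k := k)
    intro v
    rw [eval_aeval']
    apply hGvan
    simp
  have hmem := sub_aeval_mem ({0} : Finset (Fin 3)) G
  rw [hsub, sub_zero] at hmem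
  have himg : ((fun i => (X i : MvPolynomial (Fin 3) k)) '' ↑({0} : Finset (Fin 3))) =
      {X 0} := by simp
  rw [himg, Ideal.mem_span_singleton] at hmem
  -- transfer back
  have : polyMap A (X 0) ∣ polyMap A G := map_dvd _ hmem
  rw [polyMap_X] at this
  have hGA : polyMap A G = F := by
    rw [hG, ← AlgHom.comp_apply, polyMap_comp, hBA, polyMap_one, AlgHom.id_apply]
  rwa [hGA] at this

end StarCfg
end Chunk2
section Chunk3
open MvPolynomial Finset Matrix
namespace StarCfg

variable {k : Type*} [Field k]

lemma rows_det_ne_zero {u v w : Fin 3 → k} (h : LinearIndependent k ![u, v, w]) :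
    (Matrix.of ![u, v, w]).det ≠ 0 := by
  intro hd
  obtain ⟨y, hy, hyA⟩ := (Matrix.exists_vecMul_eq_zero_iff).2 hd
  have hsum : ∑ i, y i • (![u, v, w] i) = 0 := by
    funext j
    have := congrFun hyA j
    simpa [Matrix.vecMul, dotProduct, Finset.sum_apply, Pi.smul_apply, smul_eq_mul] using this
  have := Fintype.linearIndependent_iff.1 h y hsum
  exact hy (funext fun i => this i)

lemma rows_isUnit_det {u v w : Fin 3 → k} (h : LinearIndependent k ![u, v, w]) :
    IsUnit (Matrix.of ![u, v, w]).det := by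
  simpa [isUnit_iff_ne_zero] using rows_det_ne_zero h

/-- Three independent linear functionals on `k³` have trivial common kernel. -/
lemma eq_zero_of_three_indep {u v w x : Fin 3 → k} (h : LinearIndependent k ![u, v, w])
    (h1 : u ⬝ᵥ x = 0) (h2 : v ⬝ᵥ x = 0) (h3 : w ⬝ᵥ x = 0) : x = 0 := by
  by_contra hx
  have : (Matrix.of ![u, v, w]).det = 0 := by
    rw [← Matrix.exists_mulVec_eq_zero_iff]
    refine ⟨x, hx, ?_⟩
    funext i
    fin_cases i
    · simpa [Matrix.mulVec, dotProduct, Fin.sum_univ_three] using h1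
    · simpa [Matrix.mulVec, dotProduct, Fin.sum_univ_three] using h2
    · simpa [Matrix.mulVec, dotProduct, Fin.sum_univ_three] using h3
  exact rows_det_ne_zero h this

lemma exists_not_mem_span_pair (x y : Fin 3 → k) :
    ∃ u, u ∉ Submodule.span k (Set.range ![x, y]) := by
  by_contra hc
  push_neg at hc
  have htop : Submodule.span k (Set.range ![x, y]) = ⊤ := by
    rw [Submodule.eq_top_iff']
    exact hc
  have h1 := finrank_range_le_card (R := k) ![x, y]
  unfold Set.finrank at h1
  rw [htop, finrank_top, Fintype.card_fin] at h1
  have h2 : Module.finrank k (Fin 3 → k) = 3 := Module.finrank_fin_fun k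
  omega

lemma exists_not_mem_span_one (x : Fin 3 → k) :
    ∃ u, u ∉ Submodule.span k (Set.range ![x]) := by
  obtain ⟨u, hu⟩ := exists_not_mem_span_pair x x
  refine ⟨u, fun hmem => hu ?_⟩
  refine Submodule.span_mono ?_ hmem
  rintro z ⟨i, rfl⟩
  fin_cases i <;> exact ⟨0, rfl⟩

lemma snoc_two (x y u : Fin 3 → k) : (Fin.snoc ![x, y] u : Fin 3 → Fin 3 → k) = ![x, y, u] := by
  funext i
  fin_cases i <;> simp [Fin.snoc] <;> rfl

lemma snoc_one (x u : Fin 3 → k) : (Fin.snoc ![x] u : Fin 2 → Fin 3 → k) = ![x, u] := by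
  funext i
  fin_cases i <;> simp [Fin.snoc] <;> rfl

lemma extend_two {x y : Fin 3 → k} (h : LinearIndependent k ![x, y]) :
    ∃ u, LinearIndependent k ![x, y, u] := by
  obtain ⟨u, hu⟩ := exists_not_mem_span_pair x y
  exact ⟨u, by rw [← snoc_two]; exact linearIndependent_fin_snoc.2 ⟨h, hu⟩⟩

lemma extend_one {x : Fin 3 → k} (h : x ≠ 0) :
    ∃ u v, LinearIndependent k ![x, u, v] := by
  have h1 : LinearIndependent k ![x] := linearIndependent_unique_iff.2 h
  obtain ⟨u, hu⟩ := exists_not_mem_span_one x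
  have h2 : LinearIndependent k ![x, u] := by
    rw [← snoc_one]; exact linearIndependent_fin_snoc.2 ⟨h1, hu⟩
  obtain ⟨v, hv⟩ := extend_two h2
  exact ⟨u, v, hv⟩

lemma pair_ne_smul {x y : Fin 3 → k} (h : LinearIndependent k ![x, y]) (a : k) :
    x ≠ a • y := by
  intro he
  have := Fintype.linearIndependent_iff.1 h ![1, -a] (by
    simp [Fin.sum_univ_two, he])
  simpa using this 0

lemma pair_left_ne_zero {x y : Fin 3 → k} (h : LinearIndependent k ![x, y]) : x ≠ 0 :=
  h.ne_zero 0

end StarCfg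
end Chunk3
section Chunk4
open MvPolynomial Finset Matrix
namespace StarCfg

variable {k : Type*} [Field k]

lemma eval_smul_line (w : Fin 3 → k) (F : MvPolynomial (Fin 3) k) (t : k) :
    Polynomial.eval t (aeval (fun i => Polynomial.C (w i) * Polynomial.X) F) =
      eval (fun i => w i * t) F := by
  have h := MvPolynomial.eval₂_comp_left (Polynomial.evalRingHom t)
      (algebraMap k (Polynomial k)) (fun i => Polynomial.C (w i) * Polynomial.X) F
  have h1 : (Polynomial.evalRingHom t).comp (algebraMap k (Polynomial k)) = RingHom.id k := by
    ext a; simp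
  rw [h1] at h
  have h2 : ((Polynomial.evalRingHom t) ∘ fun i => Polynomial.C (w i) * Polynomial.X) =
      fun i => w i * t := by
    funext i; simp
  rw [h2, MvPolynomial.eval₂_id] at h
  rw [MvPolynomial.aeval_def]
  exact h

/-- There is a nonzero common zero of two linear functionals on `k³`. -/
lemma exists_common_zero (c0 c1 : Fin 3 → k) :
    ∃ w : Fin 3 → k, w ≠ 0 ∧ c0 ⬝ᵥ w = 0 ∧ c1 ⬝ᵥ w = 0 := by
  set M : Matrix (Fin 2) (Fin 3) k := Matrix.of ![c0, c1] with hM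
  have hker : LinearMap.ker (Matrix.mulVecLin M) ≠ ⊥ := by
    apply LinearMap.ker_ne_bot_of_finrank_lt
    rw [Module.finrank_fin_fun, Module.finrank_fin_fun]
    omega
  obtain ⟨w, hwmem, hw⟩ := Submodule.exists_mem_ne_zero_of_ne_bot hker
  refine ⟨w, hw, ?_, ?_⟩
  · have := congrFun (LinearMap.mem_ker.1 hwmem) 0
    simpa [Matrix.mulVecLin, hM, Matrix.mulVec] using this
  · have := congrFun (LinearMap.mem_ker.1 hwmem) 1
    simpa [Matrix.mulVecLin, hM, Matrix.mulVec] using this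

/-- A polynomial vanishing on the punctured common zero line of two functionals
vanishes at the origin as well. -/
lemma eval_zero_of_vanish [Infinite k] (c0 c1 : Fin 3 → k) (F : MvPolynomial (Fin 3) k)
    (h : ∀ v : Fin 3 → k, v ≠ 0 → c0 ⬝ᵥ v = 0 → c1 ⬝ᵥ v = 0 → eval v F = 0) :
    eval (0 : Fin 3 → k) F = 0 := by
  obtain ⟨w, hw, h0, h1⟩ := exists_common_zero c0 c1
  set q : Polynomial k := aeval (fun i => Polynomial.C (w i) * Polynomial.X) F with hq
  have hroots : ∀ t : k, t ≠ 0 → Polynomial.IsRoot q t := by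
    intro t ht
    rw [Polynomial.IsRoot, hq, eval_smul_line]
    apply h
    · intro hcon
      apply hw
      funext i
      have := congrFun hcon i
      simp only [Pi.zero_apply] at this ⊢
      exact by
        have := mul_eq_zero.1 this
        rcases this with h' | h'
        · exact h'
        · exact absurd h' ht
    · rw [show (fun i => w i * t) = t • w by funext i; simp [mul_comm], dotProduct_smul,
        h0, smul_zero]
    · rw [show (fun i => w i * t) = t • w by funext i; simp [mul_comm], dotProduct_smul,
        h1, smul_zero]
  have hq0 : q = 0 := by
    apply Polynomial.eq_zero_of_infinite_isRoot
    apply Set.Infinite.mono (s := {t : k | t ≠ 0})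
    · intro t ht; exact hroots t ht
    · exact (Set.finite_singleton (0:k)).infinite_compl
  have := eval_smul_line w F 0
  rw [← hq, hq0] at this
  simpa using this.symm

/-- `X 0` is prime in `k[X₀,X₁,X₂]`. -/
lemma prime_X0 : Prime (MvPolynomial.X 0 : MvPolynomial (Fin 3) k) := by
  show Prime (MvPolynomial.X 0 : MvPolynomial (Fin (2+1)) k)
  rw [← MulEquiv.prime_iff (MvPolynomial.finSuccEquiv k 2).toMulEquiv]
  have hmap : (MvPolynomial.finSuccEquiv k 2).toMulEquiv (MvPolynomial.X 0) = Polynomial.X :=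
    MvPolynomial.finSuccEquiv_X_zero
  rw [hmap]
  exact Polynomial.prime_X

lemma prime_linForm {c : Fin 3 → k} (hc : c ≠ 0) : Prime (linForm c) := by
  obtain ⟨u, v, hind⟩ := extend_one hc
  set A := Matrix.of ![c, u, v] with hA
  have hdet := rows_isUnit_det hind
  have hAB : A * A⁻¹ = 1 := Matrix.mul_nonsing_inv A hdet
  have hBA : A⁻¹ * A = 1 := Matrix.nonsing_inv_mul A hdet
  have he : (polyEquiv A A⁻¹ hAB hBA) (MvPolynomial.X 0) = linForm c := by
    show polyMap A (MvPolynomial.X 0) = linForm c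
    rw [polyMap_X]; rfl
  rw [← he]
  exact (MulEquiv.prime_iff (polyEquiv A A⁻¹ hAB hBA).toMulEquiv).2 prime_X0

lemma not_dvd_linForm {x y : Fin 3 → k} (hx : x ≠ 0) (hsm : ∀ a : k, y ≠ a • x) :
    ¬ (linForm x ∣ linForm y) := by
  intro hdvd
  -- pointwise kernel inclusion
  have hker : ∀ v : Fin 3 → k, x ⬝ᵥ v = 0 → y ⬝ᵥ v = 0 := by
    intro v hv
    obtain ⟨u, hu⟩ := hdvd
    have := congrArg (MvPolynomial.eval v) hu
    rw [eval_linForm, _root_.map_mul, eval_linForm, hv, zero_mul] at this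
    exact this
  obtain ⟨j, hj⟩ : ∃ j, x j ≠ 0 := by
    by_contra hcon; push_neg at hcon; exact hx (funext hcon)
  set v0 : Fin 3 → k := Pi.single j (x j)⁻¹ with hv0
  have hxv0 : x ⬝ᵥ v0 = 1 := by
    rw [hv0, dotProduct_single, mul_inv_cancel₀ hj]
  set a : k := y ⬝ᵥ v0 with ha
  apply hsm a
  funext m
  have hwm : x ⬝ᵥ (Pi.single m 1 - (x m) • v0) = 0 := by
    rw [dotProduct_sub, dotProduct_smul, hxv0, dotProduct_single]
    simp
  have := hker _ hwm
  rw [dotProduct_sub, dotProduct_smul, dotProduct_single, ← ha] at this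
  have : y m = x m * a := by
    have h' := sub_eq_zero.1 this
    simpa using h'
  simpa [mul_comm] using this

lemma prod_primes_dvd' {ι : Type*} {S : Type*} [CommRing S] [IsDomain S]
    (s : Finset ι) (p : ι → S) (hp : ∀ i ∈ s, Prime (p i))
    (hnd : ∀ i ∈ s, ∀ j ∈ s, i ≠ j → ¬ (p i ∣ p j)) (F : S) (h : ∀ i ∈ s, p i ∣ F) :
    (∏ i ∈ s, p i) ∣ F := by
  classical
  induction s using Finset.induction_on with
  | empty => simpa using one_dvd F
  | @insert a s ha ih =>
      obtain ⟨G, hG⟩ := ih (fun i hi => hp i (mem_insert_of_mem hi))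
        (fun i hi j hj hij => hnd i (mem_insert_of_mem hi) j (mem_insert_of_mem hj) hij)
        (fun i hi => h i (mem_insert_of_mem hi))
      have hpa : Prime (p a) := hp a (mem_insert_self a s)
      have hdvd : p a ∣ (∏ i ∈ s, p i) * G := by rw [← hG]; exact h a (mem_insert_self a s)
      rcases hpa.dvd_mul.1 hdvd with h' | h'
      · obtain ⟨j, hj, hdj⟩ := (Prime.dvd_finset_prod_iff hpa p).1 h'
        exact absurd hdj (hnd a (mem_insert_self a s) j (mem_insert_of_mem hj)
          (fun he => ha (he ▸ hj)))
      · obtain ⟨H, hH⟩ := h'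
        refine ⟨H, ?_⟩
        rw [Finset.prod_insert ha, hG, hH]
        ring

end StarCfg
end Chunk4
section Chunk5
open MvPolynomial Finset Matrix
namespace StarCfg

variable {k : Type*} [Field k]

lemma single_of_degree_one (m : Fin 3 →₀ ℕ) (hm : Finsupp.degree m = 1) :
    ∃ i, m = Finsupp.single i 1 := by
  have hsum : m 0 + m 1 + m 2 = 1 := by
    have h1 : Finsupp.degree m = ∑ i : Fin 3, m i := by
      rw [Finsupp.degree]
      apply Finset.sum_subset (Finset.subset_univ _)
      intro x _ hx
      simpa using hx
    rw [h1, Fin.sum_univ_three] at hm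
    exact hm
  have hc : (m 0 = 1 ∧ m 1 = 0 ∧ m 2 = 0) ∨ (m 0 = 0 ∧ m 1 = 1 ∧ m 2 = 0) ∨
      (m 0 = 0 ∧ m 1 = 0 ∧ m 2 = 1) := by omega
  rcases hc with ⟨h0, h1, h2⟩ | ⟨h0, h1, h2⟩ | ⟨h0, h1, h2⟩
  · exact ⟨0, Finsupp.ext fun j => by fin_cases j <;> simp [Finsupp.single_apply, h0, h1, h2]⟩
  · exact ⟨1, Finsupp.ext fun j => by fin_cases j <;> simp [Finsupp.single_apply, h0, h1, h2]⟩
  · exact ⟨2, Finsupp.ext fun j => by fin_cases j <;> simp [Finsupp.single_apply, h0, h1, h2]⟩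

lemma exists_linForm {L : MvPolynomial (Fin 3) k} (h : L.IsHomogeneous 1) :
    ∃ c : Fin 3 → k, L = linForm c := by
  refine ⟨fun i => coeff (Finsupp.single i 1) L, ?_⟩
  apply MvPolynomial.ext
  intro m
  by_cases hm : ∃ i, m = Finsupp.single i 1
  · obtain ⟨i, rfl⟩ := hm
    rw [coeff_linForm]
  · have hL : coeff m L = 0 := by
      by_contra hc
      have hd : Finsupp.degree m = 1 := by
        rw [Finsupp.degree_eq_weight_one]; exact h hc
      exact hm (single_of_degree_one m hd)
    rw [hL, linForm, coeff_sum]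
    symm
    apply Finset.sum_eq_zero
    intro i _
    rw [coeff_C_mul, coeff_X']
    rw [if_neg (fun he => hm ⟨i, he.symm⟩), mul_zero]

/-- `linForm` as a linear map. -/
noncomputable def linFormL : (Fin 3 → k) →ₗ[k] MvPolynomial (Fin 3) k where
  toFun := linForm
  map_add' := linForm_add
  map_smul' := fun a c => by
    show linForm (a • c) = a • linForm c
    rw [linForm_smul, MvPolynomial.smul_eq_C_mul]

end StarCfg
end Chunk5
section Chunk6
open MvPolynomial Finset Matrix
namespace StarCfg

variable {k : Type*} [Field k]

lemma row_vecMul_inv (A : Matrix (Fin 3) (Fin 3) k) (hA : IsUnit A.det) (r : Fin 3) :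
    A r ᵥ* A⁻¹ = Pi.single r 1 := by
  have h1 : (Pi.single r 1 : Fin 3 → k) ᵥ* A = A r := by
    funext j; simp [Matrix.vecMul, single_dotProduct]
  rw [← h1, Matrix.vecMul_vecMul, Matrix.mul_nonsing_inv A hA, Matrix.vecMul_one]

lemma indep_comp_vecMul {n : ℕ} {f : Fin n → (Fin 3 → k)} (h : LinearIndependent k f)
    (A B : Matrix (Fin 3) (Fin 3) k) (hBA : B * A = 1) :
    LinearIndependent k fun i => f i ᵥ* B := by
  have hinj : Function.Injective (Matrix.vecMulLinear B) := by
    intro p q hpq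
    have := congrArg (fun z => z ᵥ* A) hpq
    simpa [Matrix.vecMul_vecMul, hBA, Matrix.vecMul_one] using this
  have h2 := h.map' (Matrix.vecMulLinear B) (LinearMap.ker_eq_bot.2 hinj)
  have he : (fun i => f i ᵥ* B) = (Matrix.vecMulLinear B) ∘ f := by funext i; simp
  rw [he]; exact h2

/-- Transport of the span-membership goal along an invertible change of variables. -/
lemma normalize_step {l : ℕ} (c : Fin l → (Fin 3 → k)) (A : Matrix (Fin 3) (Fin 3) k)
    (hdet : IsUnit A.det) (F : MvPolynomial (Fin 3) k)
    (h : polyMap A⁻¹ F ∈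
      Ideal.span (Set.range fun i : Fin l => ∏ j ∈ univ.erase i, linForm (c j ᵥ* A⁻¹))) :
    F ∈ Ideal.span (Set.range fun i : Fin l => ∏ j ∈ univ.erase i, linForm (c j)) := by
  have hAB : A * A⁻¹ = 1 := Matrix.mul_nonsing_inv A hdet
  have hBA : A⁻¹ * A = 1 := Matrix.nonsing_inv_mul A hdet
  set e := polyEquiv A⁻¹ A hBA hAB with he
  rw [mem_span_iff_image e.toRingEquiv]
  have himg : (⇑e.toRingEquiv '' Set.range fun i : Fin l => ∏ j ∈ univ.erase i, linForm (c j)) =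
      Set.range fun i : Fin l => ∏ j ∈ univ.erase i, linForm (c j ᵥ* A⁻¹) := by
    rw [← Set.range_comp]
    have hfun : (⇑e.toRingEquiv ∘ fun i : Fin l => ∏ j ∈ univ.erase i, linForm (c j)) =
        fun i : Fin l => ∏ j ∈ univ.erase i, linForm (c j ᵥ* A⁻¹) := by
      funext i
      show e (∏ j ∈ univ.erase i, linForm (c j)) = _
      rw [map_prod]
      exact Finset.prod_congr rfl fun j _ => polyMap_linForm _ _
    rw [hfun]
  rw [himg]
  exact h

/-- The substitution that kills the variable `X 0`. -/
noncomputable def kill0 : Fin 3 → MvPolynomial (Fin 3) k :=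
  fun i => if i ∈ ({0} : Finset (Fin 3)) then 0 else X i

lemma eval_kill0 (v : Fin 3 → k) (m : Fin 3) :
    eval v (kill0 m) = if m = 0 then 0 else v m := by
  by_cases hm : m = 0 <;> simp [kill0, hm]

lemma kill0_linForm (x : Fin 3 → k) :
    aeval kill0 (linForm x) = linForm (Function.update x 0 0) := by
  rw [aeval_linForm, linForm, Fin.sum_univ_three, Fin.sum_univ_three]
  simp [kill0, Function.update]

lemma dot_update0 (x w : Fin 3 → k) :
    Function.update x 0 0 ⬝ᵥ w = x ⬝ᵥ (fun m => if m = 0 then 0 else w m) := by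
  simp only [dotProduct, Fin.sum_univ_three]
  rw [Function.update_self, Function.update_of_ne (by decide : (1 : Fin 3) ≠ 0),
    Function.update_of_ne (by decide : (2 : Fin 3) ≠ 0)]
  simp

lemma linForm_sub (c d : Fin 3 → k) : linForm (c - d) = linForm c - linForm d :=
  map_sub linFormL c d

lemma prod_erase_castSucc {l : ℕ} {S : Type*} [CommRing S] [IsDomain S]
    (f : Fin (l + 1) → S) (hf : ∀ j, f j ≠ 0) (i : Fin l) :
    ∏ j ∈ univ.erase i.castSucc, f j =
      f (Fin.last l) * ∏ j ∈ univ.erase i, f j.castSucc := by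
  apply mul_right_cancel₀ (hf i.castSucc)
  rw [Finset.prod_erase_mul _ _ (mem_univ i.castSucc), Fin.prod_univ_castSucc, mul_assoc,
    Finset.prod_erase_mul _ _ (mem_univ i)]
  ring

lemma prod_erase_last {l : ℕ} {S : Type*} [CommRing S] [IsDomain S]
    (f : Fin (l + 1) → S) (hf : ∀ j, f j ≠ 0) :
    ∏ j ∈ univ.erase (Fin.last l), f j = ∏ j : Fin l, f j.castSucc := by
  apply mul_right_cancel₀ (hf (Fin.last l))
  rw [Finset.prod_erase_mul _ _ (mem_univ (Fin.last l)), Fin.prod_univ_castSucc]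

end StarCfg
end Chunk6
section Chunk7
open MvPolynomial Finset Matrix
namespace StarCfg

variable {k : Type*} [Field k]

theorem main [Infinite k] (l : ℕ) (hl : 2 ≤ l) :
    ∀ c : Fin l → (Fin 3 → k),
    (∀ a b, a ≠ b → LinearIndependent k ![c a, c b]) →
    (∀ a b e, a ≠ b → a ≠ e → b ≠ e → LinearIndependent k ![c a, c b, c e]) →
    ∀ F : MvPolynomial (Fin 3) k,
    (∀ v : Fin 3 → k, v ≠ 0 → ∀ a b, a ≠ b → c a ⬝ᵥ v = 0 → c b ⬝ᵥ v = 0 → eval v F = 0) →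
    F ∈ Ideal.span (Set.range fun i : Fin l => ∏ j ∈ univ.erase i, linForm (c j)) := by
  induction l, hl using Nat.le_induction with
  | base =>
    intro c h2 _h3 F hF
    have hind2 : LinearIndependent k ![c 0, c 1] := h2 0 1 (by decide)
    obtain ⟨u, hu⟩ := extend_two hind2
    set A : Matrix (Fin 3) (Fin 3) k := Matrix.of ![c 0, c 1, u] with hA
    have hdet := rows_isUnit_det hu
    apply normalize_step c A hdet
    set d : Fin 2 → (Fin 3 → k) := fun j => c j ᵥ* A⁻¹ with hd
    set G := polyMap A⁻¹ F with hG
    have hd0 : d 0 = Pi.single 0 1 := by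
      rw [hd]
      show A 0 ᵥ* A⁻¹ = _
      exact row_vecMul_inv A hdet 0
    have hd1 : d 1 = Pi.single 1 1 := by
      rw [hd]
      show A 1 ᵥ* A⁻¹ = _
      exact row_vecMul_inv A hdet 1
    -- G vanishes whenever v 0 = 0 and v 1 = 0
    have hGvan : ∀ v : Fin 3 → k, v 0 = 0 → v 1 = 0 → eval v G = 0 := by
      intro v h0 h1
      rw [hG, eval_polyMap]
      by_cases hv : A⁻¹ *ᵥ v = 0
      · rw [hv]
        exact eval_zero_of_vanish (c 0) (c 1) F (fun w hw ha hb => hF w hw 0 1 (by decide) ha hb)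
      · apply hF _ hv 0 1 (by decide)
        · rw [Matrix.dotProduct_mulVec]
          show d 0 ⬝ᵥ v = 0
          rw [hd0, single_dotProduct, one_mul, h0]
        · rw [Matrix.dotProduct_mulVec]
          show d 1 ⬝ᵥ v = 0
          rw [hd1, single_dotProduct, one_mul, h1]
    -- kill variables 0 and 1
    have hsub : aeval (fun i => if i ∈ ({0, 1} : Finset (Fin 3)) then 0
        else X i : Fin 3 → MvPolynomial (Fin 3) k) G = 0 := by
      apply eval_eq_zero_all (k := k)
      intro v
      rw [eval_aeval']
      apply hGvan <;> simp
    have hmem := sub_aeval_mem ({0, 1} : Finset (Fin 3)) G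
    rw [hsub, sub_zero] at hmem
    have himg : ((fun i => (X i : MvPolynomial (Fin 3) k)) '' ↑({0, 1} : Finset (Fin 3))) =
        {X 0, X 1} := by
      rw [Finset.coe_insert, Finset.coe_singleton, Set.image_insert_eq, Set.image_singleton]
    rw [himg] at hmem
    refine Ideal.span_mono ?_ hmem
    rintro z (rfl | rfl)
    · refine ⟨1, ?_⟩
      show ∏ j ∈ univ.erase (1 : Fin 2), linForm (c j ᵥ* A⁻¹) = X 0
      rw [show univ.erase (1 : Fin 2) = {0} by decide, Finset.prod_singleton,
        show (c 0 ᵥ* A⁻¹) = Pi.single 0 1 from hd0, linForm_single]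
    · refine ⟨0, ?_⟩
      show ∏ j ∈ univ.erase (0 : Fin 2), linForm (c j ᵥ* A⁻¹) = X 1
      rw [show univ.erase (0 : Fin 2) = {1} by decide, Finset.prod_singleton,
        show (c 1 ᵥ* A⁻¹) = Pi.single 1 1 from hd1, linForm_single]
  | succ l hl ih =>
    intro c h2 h3 F hF
    set last : Fin (l + 1) := Fin.last l with hlastdef
    have hne0last : (0 : Fin (l + 1)) ≠ last := by
      apply Fin.ne_of_val_ne
      rw [Fin.val_zero, hlastdef, Fin.val_last]
      omega
    have hne01 : (0 : Fin (l + 1)) ≠ 1 := by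
      apply Fin.ne_of_val_ne
      rw [Fin.val_zero, Fin.val_one', Nat.mod_eq_of_lt (by omega)]
      omega
    have hclast : c last ≠ 0 := pair_left_ne_zero (h2 last 0 (Ne.symm hne0last))
    obtain ⟨u, v, hext⟩ := extend_one hclast
    set A : Matrix (Fin 3) (Fin 3) k := Matrix.of ![c last, u, v] with hA
    have hdet := rows_isUnit_det hext
    apply normalize_step c A hdet
    have hAB : A * A⁻¹ = 1 := Matrix.mul_nonsing_inv A hdet
    have hBA : A⁻¹ * A = 1 := Matrix.nonsing_inv_mul A hdet
    set d : Fin (l + 1) → (Fin 3 → k) := fun j => c j ᵥ* A⁻¹ with hd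
    set G := polyMap A⁻¹ F with hG
    show G ∈ Ideal.span (Set.range fun i : Fin (l + 1) => ∏ j ∈ univ.erase i, linForm (d j))
    have hdlast : d last = Pi.single 0 1 := by
      rw [hd]
      show A 0 ᵥ* A⁻¹ = _
      exact row_vecMul_inv A hdet 0
    -- transported hypotheses
    have h2' : ∀ a b, a ≠ b → LinearIndependent k ![d a, d b] := by
      intro a b hab
      have h' := indep_comp_vecMul (h2 a b hab) A A⁻¹ hBA
      have he : (fun i => ![c a, c b] i ᵥ* A⁻¹) = ![d a, d b] := by
        funext i; fin_cases i <;> rfl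
      rwa [he] at h'
    have h3' : ∀ a b e, a ≠ b → a ≠ e → b ≠ e → LinearIndependent k ![d a, d b, d e] := by
      intro a b e hab hae hbe
      have h' := indep_comp_vecMul (h3 a b e hab hae hbe) A A⁻¹ hBA
      have he : (fun i => ![c a, c b, c e] i ᵥ* A⁻¹) = ![d a, d b, d e] := by
        funext i; fin_cases i <;> rfl
      rwa [he] at h'
    have hdne : ∀ j, d j ≠ 0 := by
      intro j
      by_cases hj : j = 0
      · exact pair_left_ne_zero (h2' j last (by rw [hj]; exact hne0last))
      · exact pair_left_ne_zero (h2' j 0 hj)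
    have hGvan : ∀ w : Fin 3 → k, w ≠ 0 → ∀ a b, a ≠ b →
        d a ⬝ᵥ w = 0 → d b ⬝ᵥ w = 0 → eval w G = 0 := by
      intro w hw a b hab ha hb
      rw [hG, eval_polyMap]
      have hw' : A⁻¹ *ᵥ w ≠ 0 := by
        intro hcon
        apply hw
        have h4 : A *ᵥ (A⁻¹ *ᵥ w) = w := by
          rw [Matrix.mulVec_mulVec, hAB, Matrix.one_mulVec]
        rw [← h4, hcon, Matrix.mulVec_zero]
      refine hF _ hw' a b hab ?_ ?_
      · rw [Matrix.dotProduct_mulVec]; exact ha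
      · rw [Matrix.dotProduct_mulVec]; exact hb
    have hG0 : eval (0 : Fin 3 → k) G = 0 :=
      eval_zero_of_vanish (d 0) (d 1) G (fun w hw ha hb => hGvan w hw 0 1 hne01 ha hb)
    set Gbar := aeval (kill0 (k := k)) G with hGbar
    set d' : Fin l → (Fin 3 → k) := fun i => Function.update (d i.castSucc) 0 0 with hd'
    have hcsne : ∀ i : Fin l, i.castSucc ≠ last := fun i => (Fin.castSucc_lt_last i).ne
    have hd'ne : ∀ i, d' i ≠ 0 := by
      intro i hcon
      refine pair_ne_smul (h2' i.castSucc last (hcsne i)) (d i.castSucc 0) ?_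
      rw [hdlast]
      funext m
      by_cases hm : m = 0
      · subst hm; simp [Pi.single_apply]
      · have h0 : Function.update (d i.castSucc) 0 0 m = 0 := by
          show d' i m = 0
          rw [hcon]; rfl
        rw [Function.update_of_ne hm] at h0
        simp [Pi.single_apply, hm, h0]
    -- each linForm (d' i) divides Gbar
    have hdvd : ∀ i : Fin l, linForm (d' i) ∣ Gbar := by
      intro i
      obtain ⟨u', v', hext'⟩ := extend_one (hd'ne i)
      have hdet' := rows_isUnit_det hext'
      refine linForm_dvd_of_vanish (Matrix.of ![d' i, u', v']) hdet' Gbar ?_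
      intro w hwdot
      rw [hGbar, eval_aeval']
      have hfeq : (fun m => eval w (kill0 m)) = (fun m => if m = 0 then 0 else w m) := by
        funext m; exact eval_kill0 w m
      rw [hfeq]
      by_cases hz : (fun m => if m = 0 then 0 else w m) = (0 : Fin 3 → k)
      · rw [hz]; exact hG0
      · refine hGvan _ hz i.castSucc last (hcsne i) ?_ ?_
        · rw [← dot_update0]
          exact hwdot
        · rw [hdlast, single_dotProduct, one_mul]
          simp
    -- pairwise non-divisibility
    have hnd : ∀ i : Fin l, ∀ j : Fin l, i ≠ j → ¬ (linForm (d' i) ∣ linForm (d' j)) := by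
      intro i j hij
      apply not_dvd_linForm (hd'ne i)
      intro a hsm
      have hcsij : i.castSucc ≠ j.castSucc := fun h => hij (Fin.castSucc_injective l h)
      have hind := h3' i.castSucc j.castSucc last hcsij (hcsne i) (hcsne j)
      have hb : ∀ m : Fin 3, m ≠ 0 → d j.castSucc m = a * d i.castSucc m := by
        intro m hm
        have h1 : Function.update (d j.castSucc) 0 0 m =
            a * Function.update (d i.castSucc) 0 0 m := by
          show d' j m = a * d' i m
          rw [hsm]; simp
        rwa [Function.update_of_ne hm, Function.update_of_ne hm] at h1
      have hzero := Fintype.linearIndependent_iff.1 hind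
        ![-a, 1, -(d j.castSucc 0 - a * d i.castSucc 0)]
        (by
          rw [Fin.sum_univ_three]
          show (-a) • d i.castSucc + (1 : k) • d j.castSucc +
            (-(d j.castSucc 0 - a * d i.castSucc 0)) • d last = 0
          rw [hdlast]
          funext m
          simp only [Pi.add_apply, Pi.smul_apply, smul_eq_mul, Pi.zero_apply]
          by_cases hm : m = 0
          · subst hm
            rw [Pi.single_eq_same]
            ring
          · rw [Pi.single_eq_of_ne hm]
            rw [hb m hm]
            ring)
        1
      simp at hzero
    -- the product divides Gbar
    have hP : (∏ i : Fin l, linForm (d' i)) ∣ Gbar :=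
      prod_primes_dvd' univ (fun i => linForm (d' i)) (fun i _ => prime_linForm (hd'ne i))
        (fun i _ j _ hij => hnd i j hij) Gbar (fun i _ => hdvd i)
    obtain ⟨G2, hG2⟩ := hP
    -- G - Gbar = X 0 * H0
    have hmem0 := sub_aeval_mem ({0} : Finset (Fin 3)) G
    have hk : (aeval (fun i => if i ∈ ({0} : Finset (Fin 3)) then 0
        else X i : Fin 3 → MvPolynomial (Fin 3) k)) G = Gbar := rfl
    rw [hk] at hmem0
    have himg : ((fun i => (X i : MvPolynomial (Fin 3) k)) '' ↑({0} : Finset (Fin 3))) =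
        {X 0} := by simp
    rw [himg, Ideal.mem_span_singleton] at hmem0
    obtain ⟨H0, hH0⟩ := hmem0
    -- the product is congruent to Q mod X 0
    set Q := ∏ j ∈ univ.erase last, linForm (d j) with hQ
    have hprod : ∏ i : Fin l, linForm (d i.castSucc) = Q :=
      (prod_erase_last (fun j => linForm (d j)) (fun j => linForm_ne_zero (hdne j))).symm
    have hmodeach : ∀ i : Fin l,
        Ideal.Quotient.mk (Ideal.span {(X 0 : MvPolynomial (Fin 3) k)}) (linForm (d' i)) =
        Ideal.Quotient.mk (Ideal.span {(X 0 : MvPolynomial (Fin 3) k)})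
          (linForm (d i.castSucc)) := by
      intro i
      rw [Ideal.Quotient.mk_eq_mk_iff_sub_mem]
      have hveq : d' i - d i.castSucc =
          (-(d i.castSucc 0)) • (Pi.single (0 : Fin 3) (1 : k) : Fin 3 → k) := by
        funext m
        simp only [Pi.sub_apply, Pi.smul_apply, smul_eq_mul]
        by_cases hm : m = 0
        · subst hm
          rw [Pi.single_eq_same]
          show d' i 0 - d i.castSucc 0 = _
          rw [show d' i 0 = 0 from Function.update_self 0 0 _]
          ring
        · rw [Pi.single_eq_of_ne hm]
          show d' i m - d i.castSucc m = _
          rw [show d' i m = d i.castSucc m from Function.update_of_ne hm 0 _]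
          ring
      have hlin : linForm (d' i) - linForm (d i.castSucc) = -(C (d i.castSucc 0) * X 0) := by
        rw [← linForm_sub, hveq, linForm_smul, linForm_single, map_neg, neg_mul]
      rw [hlin]
      exact neg_mem (Ideal.mul_mem_left _ _ (Ideal.subset_span (Set.mem_singleton _)))
    have hmk : Ideal.Quotient.mk (Ideal.span {(X 0 : MvPolynomial (Fin 3) k)})
        (∏ i : Fin l, linForm (d' i)) =
        Ideal.Quotient.mk (Ideal.span {(X 0 : MvPolynomial (Fin 3) k)}) Q := by
      rw [← hprod, map_prod, map_prod]
      exact Finset.prod_congr rfl fun i _ => hmodeach i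
    rw [Ideal.Quotient.mk_eq_mk_iff_sub_mem, Ideal.mem_span_singleton] at hmk
    obtain ⟨R, hR⟩ := hmk
    -- decomposition
    have hGdecomp : G = Q * G2 + X 0 * (R * G2 + H0) := by
      linear_combination hH0 + hG2 + hR * G2
    -- R * G2 + H0 vanishes on the smaller star cone
    have hH' : ∀ w : Fin 3 → k, w ≠ 0 → ∀ a b : Fin l, a ≠ b →
        d a.castSucc ⬝ᵥ w = 0 → d b.castSucc ⬝ᵥ w = 0 → eval w (R * G2 + H0) = 0 := by
      intro w hw a b hab ha hb
      have hcsab : a.castSucc ≠ b.castSucc := fun h => hab (Fin.castSucc_injective l h)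
      have hw0 : w 0 ≠ 0 := by
        intro h0
        apply hw
        refine eq_zero_of_three_indep
          (h3' a.castSucc b.castSucc last hcsab (hcsne a) (hcsne b)) ha hb ?_
        rw [hdlast, single_dotProduct, one_mul, h0]
      have hevalG : eval w G = 0 := hGvan w hw a.castSucc b.castSucc hcsab ha hb
      have hevalQ : eval w Q = 0 := by
        rw [hQ, MvPolynomial.eval_prod]
        exact Finset.prod_eq_zero (Finset.mem_erase.2 ⟨hcsne a, mem_univ _⟩)
          (by rw [eval_linForm]; exact ha)
      have hcast := congrArg (eval w) hGdecomp
      simp only [map_add, _root_.map_mul, hevalQ, MvPolynomial.eval_X, hevalG, zero_mul,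
        zero_add] at hcast
      rw [map_add, _root_.map_mul]
      exact (mul_eq_zero.1 hcast.symm).resolve_left hw0
    -- apply the induction hypothesis
    have hIH := ih (fun i => d i.castSucc)
      (fun a b hab => h2' a.castSucc b.castSucc (fun h => hab (Fin.castSucc_injective l h)))
      (fun a b e hab hae hbe => h3' a.castSucc b.castSucc e.castSucc
        (fun h => hab (Fin.castSucc_injective l h)) (fun h => hae (Fin.castSucc_injective l h))
        (fun h => hbe (Fin.castSucc_injective l h)))
      (R * G2 + H0) hH'
    rw [hGdecomp]
    apply Ideal.add_mem
    · exact Ideal.mul_mem_right _ _ (Ideal.subset_span ⟨last, rfl⟩)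
    · refine Submodule.span_induction (p := fun x _ =>
        (X 0 : MvPolynomial (Fin 3) k) * x ∈
          Ideal.span (Set.range fun i : Fin (l + 1) => ∏ j ∈ univ.erase i, linForm (d j)))
        ?_ ?_ ?_ ?_ hIH
      · rintro x ⟨i, rfl⟩
        show (X 0 : MvPolynomial (Fin 3) k) * (∏ j ∈ univ.erase i, linForm (d j.castSucc)) ∈
          Ideal.span (Set.range fun i : Fin (l + 1) => ∏ j ∈ univ.erase i, linForm (d j))
        have heq : (X 0 : MvPolynomial (Fin 3) k) *
            ∏ j ∈ univ.erase i, linForm (d j.castSucc) =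
            ∏ j ∈ univ.erase i.castSucc, linForm (d j) := by
          rw [prod_erase_castSucc (fun j => linForm (d j))
            (fun j => linForm_ne_zero (hdne j)) i]
          congr 1
          rw [hdlast, linForm_single]
        rw [heq]
        exact Ideal.subset_span ⟨i.castSucc, rfl⟩
      · show (X 0 : MvPolynomial (Fin 3) k) * 0 ∈
          Ideal.span (Set.range fun i : Fin (l + 1) => ∏ j ∈ univ.erase i, linForm (d j))
        rw [mul_zero]; exact Ideal.zero_mem _
      · intro x y _ _ hx hy
        show (X 0 : MvPolynomial (Fin 3) k) * (x + y) ∈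
          Ideal.span (Set.range fun i : Fin (l + 1) => ∏ j ∈ univ.erase i, linForm (d j))
        rw [mul_add]
        exact Ideal.add_mem _ hx hy
      · intro a x _ hx
        show (X 0 : MvPolynomial (Fin 3) k) * (a • x) ∈
          Ideal.span (Set.range fun i : Fin (l + 1) => ∏ j ∈ univ.erase i, linForm (d j))
        rw [smul_eq_mul, show (X 0 : MvPolynomial (Fin 3) k) * (a * x) = a * (X 0 * x) by ring]
        exact Ideal.mul_mem_left _ _ hx

end StarCfg
end Chunk7

/-- For three-wise linearly independent linear forms `L₁,…,L_l` (`l ≥ 2`)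
over an algebraically closed field, the vanishing ideal of the star configuration `𝕏(l)` is
generated by the products `L̂_i = ∏_{j ≠ i} L_j`. -/
theorem vanishingIdeal_eq_span_Lhat {k : Type*} [Field k] [IsAlgClosed k]
    (l : ℕ) (hl : 2 ≤ l) (L : Fin l → MvPolynomial (Fin 3) k)
    (hhom : ∀ i, (L i).IsHomogeneous 1)
    (h2 : ∀ a b : Fin l, a ≠ b → LinearIndependent k ![L a, L b])
    (h3 : ∀ a b c : Fin l, a ≠ b → a ≠ c → b ≠ c → LinearIndependent k ![L a, L b, L c]) :
    vanishingIdealOf (starCone L) =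
      Ideal.span (Set.range fun i : Fin l => ∏ j ∈ univ.erase i, L j) := by
  classical
  choose c hc using fun i => StarCfg.exists_linForm (hhom i)
  apply le_antisymm
  · intro F hFmem
    have hF : ∀ v ∈ starCone L, eval v F = 0 := hFmem
    have hfun : (fun i : Fin l => ∏ j ∈ univ.erase i, L j) =
        (fun i : Fin l => ∏ j ∈ univ.erase i, StarCfg.linForm (c j)) := by
      funext i
      exact Finset.prod_congr rfl fun j _ => by rw [hc j]
    rw [hfun]
    apply StarCfg.main l hl c
    · intro a b hab
      have h' := h2 a b hab
      have he : ![L a, L b] = ⇑StarCfg.linFormL ∘ ![c a, c b] := by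
        funext i
        fin_cases i
        · show L a = StarCfg.linFormL (c a); rw [hc a]; rfl
        · show L b = StarCfg.linFormL (c b); rw [hc b]; rfl
      rw [he] at h'
      exact LinearIndependent.of_comp _ h'
    · intro a b e hab hae hbe
      have h' := h3 a b e hab hae hbe
      have he : ![L a, L b, L e] = ⇑StarCfg.linFormL ∘ ![c a, c b, c e] := by
        funext i
        fin_cases i
        · show L a = StarCfg.linFormL (c a); rw [hc a]; rfl
        · show L b = StarCfg.linFormL (c b); rw [hc b]; rfl
        · show L e = StarCfg.linFormL (c e); rw [hc e]; rfl
      rw [he] at h'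
      exact LinearIndependent.of_comp _ h'
    · intro v hv a b hab ha hb
      refine hF v ⟨hv, a, b, hab, ?_, ?_⟩
      · rw [hc a, StarCfg.eval_linForm]; exact ha
      · rw [hc b, StarCfg.eval_linForm]; exact hb
  · rw [Ideal.span_le]
    rintro z ⟨i, rfl⟩
    intro v hv
    obtain ⟨hv0, a, b, hab, ha, hb⟩ := hv
    show eval v (∏ j ∈ univ.erase i, L j) = 0
    rw [MvPolynomial.eval_prod]
    by_cases hai : a = i
    · subst hai
      exact Finset.prod_eq_zero (Finset.mem_erase.2 ⟨Ne.symm hab, mem_univ _⟩) hb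
    · exact Finset.prod_eq_zero (Finset.mem_erase.2 ⟨hai, mem_univ _⟩) ha
end

section
/- Let L₁,…,L_l be three-wise linearly independent linear forms in S = k[x₀,x₁,x₂], l ≥ 2, and let d ≥ l − 1. Then dim_k (I_{𝕏(l)})_d = binom(d+2,2) − binom(l,2). -/
open MvPolynomial Finset Module

section StarAux
variable {k : Type*} [Field k]

lemma star_degree_one_classify {α : Type*} {x : α →₀ ℕ} (h : x.degree = 1) :
    ∃ j, x = Finsupp.single j 1 := by
  classical
  have hsum : ∑ i ∈ x.support, x i = 1 := h
  have hne : x.support.Nonempty := by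
    by_contra hc
    rw [Finset.not_nonempty_iff_eq_empty] at hc
    rw [hc] at hsum; simp at hsum
  obtain ⟨j, hj⟩ := hne
  have hj1 : 1 ≤ x j := Nat.one_le_iff_ne_zero.2 (Finsupp.mem_support_iff.1 hj)
  have hle : x j ≤ 1 := hsum ▸ Finset.single_le_sum (fun i _ => Nat.zero_le _) hj
  have hxj : x j = 1 := le_antisymm hle hj1
  have hsplit : x j + ∑ i ∈ x.support.erase j, x i = 1 := by
    rw [Finset.add_sum_erase _ _ hj]; exact hsum
  have hz : ∀ i ∈ x.support.erase j, x i = 0 :=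
    Finset.sum_eq_zero_iff.1 (by omega)
  refine ⟨j, Finsupp.ext fun i => ?_⟩
  rcases eq_or_ne i j with rfl | hij
  · simp [hxj]
  · rw [Finsupp.single_apply, if_neg (Ne.symm hij)]
    by_cases hi : i ∈ x.support
    · exact hz i (Finset.mem_erase.2 ⟨hij, hi⟩)
    · exact Finsupp.notMem_support_iff.1 hi

/-- The linear functional associated to (the degree-1 part of) a polynomial. -/
noncomputable def linOf : MvPolynomial (Fin 3) k →ₗ[k] Module.Dual k (Fin 3 → k) where
  toFun F := ∑ j, coeff (Finsupp.single j 1) F • LinearMap.proj j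
  map_add' F G := by
    simp [coeff_add, add_smul, Finset.sum_add_distrib]
  map_smul' c F := by
    simp [coeff_smul, smul_eq_mul, mul_smul, Finset.smul_sum]

lemma linOf_apply (F : MvPolynomial (Fin 3) k) (v : Fin 3 → k) :
    linOf F v = ∑ j, coeff (Finsupp.single j 1) F * v j := by
  simp [linOf]

lemma degree_of_mem_support {F : MvPolynomial (Fin 3) k} {n : ℕ} (hF : F.IsHomogeneous n)
    {x : Fin 3 →₀ ℕ} (hx : x ∈ F.support) : x.degree = n := by
  rw [Finsupp.degree_eq_weight_one]
  exact hF (mem_support_iff.1 hx)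

lemma eval_eq_linOf {F : MvPolynomial (Fin 3) k} (hF : F.IsHomogeneous 1) (v : Fin 3 → k) :
    eval v F = linOf F v := by
  classical
  rw [eval_eq, linOf_apply]
  have hsub : F.support ⊆ Finset.univ.image (fun j : Fin 3 => Finsupp.single j 1) := by
    intro x hx
    obtain ⟨j, rfl⟩ := star_degree_one_classify (degree_of_mem_support hF hx)
    exact Finset.mem_image.2 ⟨j, Finset.mem_univ j, rfl⟩
  rw [Finset.sum_subset hsub (by
    intro x _ hx
    rw [notMem_support_iff.1 hx, zero_mul])]
  rw [Finset.sum_image (by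
    intro a _ b _ hab
    by_contra hne
    have := Finsupp.single_left_injective (one_ne_zero (α := ℕ)) hab
    exact hne this)]
  refine Finset.sum_congr rfl fun j _ => ?_
  congr 1
  rw [Finsupp.support_single_ne_zero _ one_ne_zero]
  simp

lemma eval_smul_of_isHomogeneous {F : MvPolynomial (Fin 3) k} {n : ℕ}
    (hF : F.IsHomogeneous n) (c : k) (v : Fin 3 → k) :
    eval (c • v) F = c ^ n * eval v F := by
  rw [eval_eq, eval_eq, Finset.mul_sum]
  refine Finset.sum_congr rfl fun x hx => ?_
  have hdeg : ∑ i ∈ x.support, x i = n := degree_of_mem_support hF hx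
  have : ∏ i ∈ x.support, (c • v) i ^ x i
      = c ^ n * ∏ i ∈ x.support, v i ^ x i := by
    rw [← hdeg, ← Finset.prod_pow_eq_pow_sum, ← Finset.prod_mul_distrib]
    refine Finset.prod_congr rfl fun i _ => ?_
    simp [mul_pow]
  rw [this]; ring

end StarAux

section StarAux2
variable {k : Type*} [Field k]

lemma star_pair_common_zero (φ ψ : Module.Dual k (Fin 3 → k))
    (h : LinearIndependent k ![φ, ψ]) :
    ∃ p : Fin 3 → k, p ≠ 0 ∧ φ p = 0 ∧ ψ p = 0 ∧
      ∀ v, φ v = 0 → ψ v = 0 → ∃ c : k, v = c • p := by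
  classical
  set f : (Fin 3 → k) →ₗ[k] k × k := φ.prod ψ with hf
  have hφ0 : φ ≠ 0 := by
    rintro rfl
    obtain ⟨h1, -⟩ := LinearIndependent.pair_iff.1 h 1 0 (by simp)
    exact one_ne_zero h1
  have hrange : LinearMap.range f = ⊤ := by
    by_contra hne
    have hlt : finrank k (LinearMap.range f) < 2 := by
      have := Submodule.finrank_lt (K := k) (V := k × k)
        hne
      simpa [Module.finrank_prod] using this
    obtain ⟨w, hw⟩ := _root_.finrank_le_one_iff.1 (by omega :
      finrank k (LinearMap.range f) ≤ 1)
    -- w : ↥(range f); every element of range is multiple of w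
    have key : ∀ v : Fin 3 → k, ∃ c : k, φ v = c * (w : k × k).1 ∧ ψ v = c * (w : k × k).2 := by
      intro v
      obtain ⟨c, hc⟩ := hw ⟨f v, LinearMap.mem_range_self f v⟩
      have := congrArg Subtype.val hc
      rw [Submodule.coe_smul] at this
      refine ⟨c, ?_, ?_⟩
      · have := congrArg Prod.fst this
        simpa [hf, LinearMap.prod_apply] using this.symm
      · have := congrArg Prod.snd this
        simpa [hf, LinearMap.prod_apply] using this.symm
    have hrel : (w : k × k).2 • φ + (-(w : k × k).1) • ψ = 0 := by
      refine LinearMap.ext fun v => ?_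
      obtain ⟨c, h1, h2⟩ := key v
      simp only [LinearMap.add_apply, LinearMap.smul_apply, smul_eq_mul,
        LinearMap.zero_apply, h1, h2]
      ring
    obtain ⟨hw2, hw1⟩ := LinearIndependent.pair_iff.1 h _ _ hrel
    have hw0 : (w : k × k) = 0 := by
      have : (w : k × k).1 = 0 := by simpa using hw1
      exact Prod.ext this hw2
    refine hφ0 (LinearMap.ext fun v => ?_)
    obtain ⟨c, h1, -⟩ := key v
    rw [h1, hw0]
    simp
  have hker : finrank k (LinearMap.ker f) = 1 := by
    have := LinearMap.finrank_range_add_finrank_ker f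
    rw [hrange] at this
    simp only [finrank_top, Module.finrank_prod, Module.finrank_self,
      Module.finrank_fin_fun] at this
    omega
  obtain ⟨p0, hp0, hall⟩ := _root_.finrank_eq_one_iff'.1 hker
  refine ⟨(p0 : Fin 3 → k), by simpa using hp0, ?_, ?_, ?_⟩
  · have := p0.2
    rw [LinearMap.mem_ker] at this
    exact congrArg Prod.fst this
  · have := p0.2
    rw [LinearMap.mem_ker] at this
    exact congrArg Prod.snd this
  · intro v hv1 hv2
    have hv : v ∈ LinearMap.ker f := by
      rw [LinearMap.mem_ker, hf, LinearMap.prod_apply]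
      simp [hv1, hv2]
    obtain ⟨c, hc⟩ := hall ⟨v, hv⟩
    exact ⟨c, by simpa using (congrArg Subtype.val hc).symm⟩

lemma star_triple_common_zero (φ ψ χ : Module.Dual k (Fin 3 → k))
    (h : LinearIndependent k ![φ, ψ, χ]) (v : Fin 3 → k)
    (h1 : φ v = 0) (h2 : ψ v = 0) (h3 : χ v = 0) : v = 0 := by
  have hspan : Submodule.span k (Set.range ![φ, ψ, χ]) = ⊤ :=
    h.span_eq_top_of_card_eq_finrank (by
      simp [Subspace.dual_finrank_eq, Module.finrank_fin_fun])
  rw [← Module.forall_dual_apply_eq_zero_iff k v]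
  intro g
  have hg : g ∈ Submodule.span k (Set.range ![φ, ψ, χ]) := by rw [hspan]; trivial
  induction hg using Submodule.span_induction with
  | mem x hx =>
    obtain ⟨i, rfl⟩ := hx
    fin_cases i <;> simpa [Matrix.cons_val_zero, Matrix.cons_val_one]
  | zero => simp
  | add x y _ _ hx hy => simp [hx, hy]
  | smul c x _ hx => simp [hx]

end StarAux2

section StarAux3
variable {k : Type*} [Field k]

lemma star_degree_toMultiset (f : Fin 3 →₀ ℕ) :
    f.degree = Multiset.card (Finsupp.toMultiset f) := by
  rw [Finsupp.card_toMultiset]; rfl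

noncomputable def starDegSetEquivSym (d : ℕ) :
    {x : Fin 3 →₀ ℕ // x.degree = d} ≃ Sym (Fin 3) d :=
  { toFun := fun x => ⟨Finsupp.toMultiset x.1, by rw [← star_degree_toMultiset]; exact x.2⟩
    invFun := fun m => ⟨Multiset.toFinsupp m.1, by
      rw [star_degree_toMultiset, Multiset.toFinsupp_toMultiset]
      exact m.2⟩
    left_inv := fun x => by
      ext : 1
      simp
    right_inv := fun m => by
      ext : 1
      simp }

noncomputable instance starDegSetFintype (d : ℕ) :
    Fintype {x : Fin 3 →₀ ℕ // x.degree = d} :=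
  Fintype.ofEquiv _ (starDegSetEquivSym d).symm

lemma star_card_degSet (d : ℕ) [Fintype {x : Fin 3 →₀ ℕ // x.degree = d}] :
    Fintype.card {x : Fin 3 →₀ ℕ // x.degree = d} = (d + 2).choose 2 := by
  rw [Fintype.card_congr (starDegSetEquivSym d), Sym.card_sym_eq_choose]
  have h1 : Fintype.card (Fin 3) + d - 1 = d + 2 := by simp; omega
  rw [h1]
  simpa using Nat.choose_symm (by omega : 2 ≤ d + 2)

noncomputable def starHomEquiv (d : ℕ) :
    ↥(homogeneousSubmodule (Fin 3) k d) ≃ₗ[k] ({x : Fin 3 →₀ ℕ | x.degree = d} →₀ k) :=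
  have : DecidablePred (· ∈ {x : Fin 3 →₀ ℕ | x.degree = d}) := Classical.decPred _
  (LinearEquiv.ofEq _ _ (homogeneousSubmodule_eq_finsupp_supported (Fin 3) k d)).trans
    (AddMonoidAlgebra.supportedEquivFinsupp {x : Fin 3 →₀ ℕ | x.degree = d})

instance starHomFinite (d : ℕ) :
    FiniteDimensional k ↥(homogeneousSubmodule (Fin 3) k d) := by
  letI : Fintype ↥{x : Fin 3 →₀ ℕ | x.degree = d} := starDegSetFintype d
  exact Module.Finite.equiv (starHomEquiv (k := k) d).symm

lemma star_finrank_hom (d : ℕ) :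
    finrank k ↥(homogeneousSubmodule (Fin 3) k d) = (d + 2).choose 2 := by
  letI : Fintype ↥{x : Fin 3 →₀ ℕ | x.degree = d} := starDegSetFintype d
  rw [(starHomEquiv (k := k) d).finrank_eq, finrank_finsupp_self]
  show Fintype.card {x : Fin 3 →₀ ℕ // x.degree = d} = (d + 2).choose 2
  exact star_card_degSet d

end StarAux3

section StarAux4
variable {k : Type*} [Field k]

lemma star_mem_vanishingIdealOf {X : Set (Fin 3 → k)} {F : MvPolynomial (Fin 3) k} :
    F ∈ vanishingIdealOf X ↔ ∀ v ∈ X, eval v F = 0 := Iff.rfl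

lemma star_linOf_eq_zero [Infinite k] {F : MvPolynomial (Fin 3) k}
    (hF : F.IsHomogeneous 1) (h0 : linOf (k := k) F = 0) : F = 0 := by
  apply MvPolynomial.funext
  intro v
  rw [eval_eq_linOf hF, h0]
  simp

lemma star_li_map {m : ℕ} [Infinite k] (Ls : Fin m → MvPolynomial (Fin 3) k)
    (hhom : ∀ i, (Ls i).IsHomogeneous 1) (hli : LinearIndependent k Ls) :
    LinearIndependent k fun i => linOf (Ls i) := by
  have hdis : Disjoint (Submodule.span k (Set.range Ls)) (LinearMap.ker (linOf (k := k))) := by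
    rw [Submodule.disjoint_def]
    intro F hFspan hFker
    have hFhom : F ∈ homogeneousSubmodule (Fin 3) k 1 := by
      refine Submodule.span_le.2 ?_ hFspan
      rintro G ⟨i, rfl⟩
      exact hhom i
    exact star_linOf_eq_zero hFhom (LinearMap.mem_ker.1 hFker)
  exact hli.map hdis

end StarAux4


/-- For `d ≥ l − 1`, the degree-`d` graded component of the vanishing
ideal of the star configuration `𝕏(l)` has dimension `binom(d+2,2) − binom(l,2)`. -/
theorem dim_vanishingIdeal_degree_d {k : Type*} [Field k] [IsAlgClosed k]
    (l d : ℕ) (hl : 2 ≤ l) (hd : l - 1 ≤ d) (L : Fin l → MvPolynomial (Fin 3) k)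
    (hhom : ∀ i, (L i).IsHomogeneous 1)
    (h2 : ∀ a b : Fin l, a ≠ b → LinearIndependent k ![L a, L b])
    (h3 : ∀ a b c : Fin l, a ≠ b → a ≠ c → b ≠ c → LinearIndependent k ![L a, L b, L c]) :
    Module.finrank k
      ↥(Submodule.comap (homogeneousSubmodule (Fin 3) k d).subtype
          (Submodule.restrictScalars k (vanishingIdealOf (starCone L)))) =
      (d + 2).choose 2 - l.choose 2 := by
  classical
  set φ : Fin l → Module.Dual k (Fin 3 → k) := fun i => linOf (L i) with hφdef
  have hφeval : ∀ i v, eval v (L i) = φ i v := fun i v => eval_eq_linOf (hhom i) v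
  have hφ2 : ∀ a b : Fin l, a ≠ b → LinearIndependent k ![φ a, φ b] := by
    intro a b hab
    have h := star_li_map ![L a, L b] (by intro i; fin_cases i <;> simpa using hhom _)
      (h2 a b hab)
    have he : (fun i => linOf (![L a, L b] i)) = ![φ a, φ b] := by
      funext i; fin_cases i <;> rfl
    rwa [he] at h
  have hφ3 : ∀ a b c : Fin l, a ≠ b → a ≠ c → b ≠ c →
      LinearIndependent k ![φ a, φ b, φ c] := by
    intro a b c hab hac hbc
    have h := star_li_map ![L a, L b, L c] (by intro i; fin_cases i <;> simpa using hhom _)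
      (h3 a b c hab hac hbc)
    have he : (fun i => linOf (![L a, L b, L c] i)) = ![φ a, φ b, φ c] := by
      funext i; fin_cases i <;> rfl
    rwa [he] at h
  -- choose a point on each pair of lines
  have hptex : ∀ s : {s : Finset (Fin l) // s.card = 2}, ∃ p : Fin 3 → k, p ≠ 0 ∧
      (∀ i ∈ s.1, φ i p = 0) ∧ (∀ v, (∀ i ∈ s.1, φ i v = 0) → ∃ c : k, v = c • p) := by
    rintro ⟨s, hs⟩
    obtain ⟨a, b, hab, rfl⟩ := Finset.card_eq_two.1 hs
    obtain ⟨p, hp0, hpa, hpb, huniq⟩ := star_pair_common_zero (φ a) (φ b) (hφ2 a b hab)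
    refine ⟨p, hp0, ?_, ?_⟩
    · intro i hi
      rcases Finset.mem_insert.1 hi with rfl | hi
      · exact hpa
      · rw [Finset.mem_singleton.1 hi]; exact hpb
    · intro v hv
      exact huniq v (hv a (by simp)) (hv b (by simp))
  choose pt hpt0 hptz hptu using hptex
  have hpt4 : ∀ (s : {s : Finset (Fin l) // s.card = 2}) (c : Fin l),
      c ∉ s.1 → φ c (pt s) ≠ 0 := by
    intro s c hc hzero
    obtain ⟨a, b, hab, hs⟩ := Finset.card_eq_two.1 s.2
    have hca : a ≠ c := by rintro rfl; exact hc (by rw [hs]; simp)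
    have hcb : b ≠ c := by rintro rfl; exact hc (by rw [hs]; simp)
    have ha : φ a (pt s) = 0 := hptz s a (by rw [hs]; simp)
    have hb : φ b (pt s) = 0 := hptz s b (by rw [hs]; simp)
    exact hpt0 s (star_triple_common_zero (φ a) (φ b) (φ c)
      (hφ3 a b c hab hca hcb) _ ha hb hzero)
  -- the evaluation map
  let ev : ↥(homogeneousSubmodule (Fin 3) k d) →ₗ[k]
      ({s : Finset (Fin l) // s.card = 2} → k) :=
    { toFun := fun F s => eval (pt s) (F : MvPolynomial (Fin 3) k)
      map_add' := by intro F G; funext s; simp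
      map_smul' := by intro c F; funext s; simp [smul_eval] }
  have hev : ∀ (F : ↥(homogeneousSubmodule (Fin 3) k d)) s,
      ev F s = eval (pt s) (F : MvPolynomial (Fin 3) k) := fun _ _ => rfl
  -- the kernel of `ev` is our submodule
  have hker : LinearMap.ker ev = Submodule.comap (homogeneousSubmodule (Fin 3) k d).subtype
      (Submodule.restrictScalars k (vanishingIdealOf (starCone L))) := by
    ext F
    rw [LinearMap.mem_ker, Submodule.mem_comap, Submodule.restrictScalars_mem,
      star_mem_vanishingIdealOf]
    simp only [Submodule.subtype_apply]
    constructor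
    · intro hF v hv
      obtain ⟨hv0, a, b, hab, ha, hb⟩ := hv
      set s : {s : Finset (Fin l) // s.card = 2} := ⟨{a, b}, Finset.card_pair hab⟩ with hsdef
      have hvz : ∀ i ∈ s.1, φ i v = 0 := by
        intro i hi
        rcases Finset.mem_insert.1 hi with rfl | hi
        · rw [← hφeval]; exact ha
        · rw [Finset.mem_singleton.1 hi, ← hφeval]; exact hb
      obtain ⟨c, rfl⟩ := hptu s v hvz
      have h0 : eval (pt s) (F : MvPolynomial (Fin 3) k) = 0 := by
        rw [← hev F s, hF]; rfl
      rw [eval_smul_of_isHomogeneous F.2 c (pt s), h0, mul_zero]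
    · intro hF
      funext s
      have hmem : pt s ∈ starCone L := by
        obtain ⟨a, b, hab, hs⟩ := Finset.card_eq_two.1 s.2
        exact ⟨hpt0 s, a, b, hab, by rw [hφeval]; exact hptz s a (by rw [hs]; simp),
          by rw [hφeval]; exact hptz s b (by rw [hs]; simp)⟩
      exact hF (pt s) hmem
  -- `ev` is surjective
  have hrange : LinearMap.range ev = ⊤ := by
    have hsingle : ∀ s₀ : {s : Finset (Fin l) // s.card = 2},
        (fun s => if s₀ = s then (1 : k) else 0) ∈ LinearMap.range ev := by
      intro s₀
      obtain ⟨j, hj⟩ := Function.ne_iff.1 (hpt0 s₀)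
      set G : MvPolynomial (Fin 3) k :=
        (∏ c ∈ Finset.univ \ s₀.1, L c) * (X j) ^ (d - (l - 2)) with hGdef
      have hGhom : G.IsHomogeneous d := by
        have h1 : (∏ c ∈ Finset.univ \ s₀.1, L c).IsHomogeneous (l - 2) := by
          have hp := MvPolynomial.IsHomogeneous.prod (Finset.univ \ s₀.1) L (fun _ => 1)
            (fun i _ => hhom i)
          have hcard : ∑ _c ∈ Finset.univ \ s₀.1, 1 = l - 2 := by
            rw [Finset.sum_const, smul_eq_mul, mul_one,
              Finset.card_sdiff_of_subset (Finset.subset_univ _)]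
            rw [s₀.2]
            simp
          rwa [hcard] at hp
        have h2' : ((X j : MvPolynomial (Fin 3) k) ^ (d - (l - 2))).IsHomogeneous
            (d - (l - 2)) := by
          simpa using (isHomogeneous_X k j).pow (d - (l - 2))
        have hmul := h1.mul h2'
        have hsum : (l - 2) + (d - (l - 2)) = d := by omega
        rwa [hsum] at hmul
      have hGne : eval (pt s₀) G ≠ 0 := by
        rw [hGdef]
        rw [eval_mul, eval_pow, eval_X, map_prod]
        apply mul_ne_zero
        · rw [Finset.prod_ne_zero_iff]
          intro c hc
          rw [hφeval]
          exact hpt4 s₀ c (Finset.mem_sdiff.1 hc).2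
        · exact pow_ne_zero _ hj
      have hGzero : ∀ s, s ≠ s₀ → eval (pt s) G = 0 := by
        intro s hs
        obtain ⟨c, hcs, hcns⟩ : ∃ c, c ∈ s.1 ∧ c ∉ s₀.1 := by
          by_contra hc
          push_neg at hc
          have hsub : s.1 ⊆ s₀.1 := hc
          have := Finset.eq_of_subset_of_card_le hsub (by rw [s.2, s₀.2])
          exact hs (Subtype.ext this)
        rw [hGdef, eval_mul, map_prod]
        apply mul_eq_zero_of_left
        apply Finset.prod_eq_zero (Finset.mem_sdiff.2 ⟨Finset.mem_univ c, hcns⟩)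
        rw [hφeval]; exact hptz s c hcs
      refine ⟨(eval (pt s₀) G)⁻¹ • ⟨G, hGhom⟩, ?_⟩
      funext s
      have : ev ((eval (pt s₀) G)⁻¹ • ⟨G, hGhom⟩) s
          = (eval (pt s₀) G)⁻¹ * eval (pt s) G := by
        rw [map_smul]; rfl
      rw [this]
      by_cases hss : s₀ = s
      · subst hss
        rw [if_pos rfl, inv_mul_cancel₀ hGne]
      · rw [if_neg hss, hGzero s (fun h => hss h.symm), mul_zero]
    rw [← top_le_iff]
    intro x _
    rw [pi_eq_sum_univ x]
    exact Submodule.sum_mem _ fun s _ => Submodule.smul_mem _ _ (hsingle s)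
  -- rank-nullity
  have hrn := LinearMap.finrank_range_add_finrank_ker ev
  rw [hrange, hker, star_finrank_hom d] at hrn
  have hcard : finrank k ↥(⊤ : Submodule k ({s : Finset (Fin l) // s.card = 2} → k))
      = l.choose 2 := by
    rw [finrank_top, Module.finrank_pi, Fintype.card_finset_len, Fintype.card_fin]
  rw [hcard] at hrn
  omega
end
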